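/- arXiv:1607.00514 — 4 statements merged into one kernel-verified Lean document; each statement's English description precedes it below -/
import Mathlib

section
/- Let M_n = V diag(Λ_{n1},…,Λ_{nd}) V⁻¹, n = 1,…,N, be real d×d jointly diagonalizable matrices with real eigenvalues satisfying: for every i ≠ i' there exists n with Λ_{ni} ≠ Λ_{ni'}. Then there exists β = (β_1,…,β_N) ∈ ℝ^N such that the matrix M = Σ_{n=1}^N β_n M_n has d distinct real eigenvalues. -/
open Matrix Kronecker BigOperators

noncomputable section

/-- Square real matrices. -/
abbrev Mat (d : ℕ) := Matrix (Fin d) (Fin d) ℝ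

/-- Strictly lower-triangular part: `[low A]_{ij} = A_{ij}` if `i > j`, else `0`. -/
def lowPart {d : ℕ} (A : Mat d) : Mat d :=
  Matrix.of fun i j => if (j : ℕ) < (i : ℕ) then A i j else 0

/-- Frobenius norm. -/
def frob {m n : Type*} [Fintype m] [Fintype n] (A : Matrix m n ℝ) : ℝ :=
  Real.sqrt (∑ i, ∑ j, (A i j) ^ 2)

/-- Euclidean norm of a vector. -/
def enorm {m : Type*} [Fintype m] (v : m → ℝ) : ℝ :=
  Real.sqrt (∑ i, (v i) ^ 2)

/-- Largest singular value. -/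
def sigMax {m n : Type*} [Fintype m] [Fintype n] (A : Matrix m n ℝ) : ℝ :=
  sSup {r | ∃ x : n → ℝ, _root_.enorm x = 1 ∧ r = _root_.enorm (A.mulVec x)}

/-- Smallest singular value. -/
def sigMin {m n : Type*} [Fintype m] [Fintype n] (A : Matrix m n ℝ) : ℝ :=
  sInf {r | ∃ x : n → ℝ, _root_.enorm x = 1 ∧ r = _root_.enorm (A.mulVec x)}

/-- Spectral norm (largest singular value). -/
def specNorm {m n : Type*} [Fintype m] [Fintype n] (A : Matrix m n ℝ) : ℝ := sigMax A

/-- Condition number `κ(A) = σ_max(A)/σ_min(A)`. -/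
def condNum {m n : Type*} [Fintype m] [Fintype n] (A : Matrix m n ℝ) : ℝ :=
  sigMax A / sigMin A

/-- Matrix exponential. -/
def matExp {d : ℕ} (A : Mat d) : Mat d := ∑' k : ℕ, ((k.factorial : ℝ))⁻¹ • A ^ k

/-- Column-wise vectorization: index `(j, i)` holds the `(i, j)` entry. -/
def vecM {d : ℕ} (A : Mat d) : Fin d × Fin d → ℝ := fun p => A p.2 p.1

/-- Inverse of the column-wise vectorization. -/
def matM {d : ℕ} (v : Fin d × Fin d → ℝ) : Mat d := Matrix.of fun i j => v (j, i)

/-- The `d² × d²` diagonal 0/1 matrix `Low` with `Low (vec A) = vec (low A)`. -/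
def lowOp (d : ℕ) : Matrix (Fin d × Fin d) (Fin d × Fin d) ℝ :=
  Matrix.diagonal fun p => if (p.1 : ℕ) < (p.2 : ℕ) then 1 else 0

/-- `P` is a valid `P_low` projector: `P Pᵀ = 1` and `Pᵀ P = Low`. -/
def IsPlow {d k : ℕ} (P : Matrix (Fin k) (Fin d × Fin d) ℝ) : Prop :=
  P * Pᵀ = 1 ∧ Pᵀ * P = lowOp d

/-- Orthogonal matrix. -/
def IsOrtho {d : ℕ} (U : Mat d) : Prop := Uᵀ * U = 1

/-- Skew-symmetric matrix. -/
def IsSkew {d : ℕ} (X : Mat d) : Prop := Xᵀ = -X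

/-- Matrix commutator. -/
def mcomm {d : ℕ} (A B : Mat d) : Mat d := A * B - B * A

/-- `U₀` is an exact joint triangularizer of the family `M`. -/
def ExactTriang {d N : ℕ} (U₀ : Mat d) (M : Fin N → Mat d) : Prop :=
  IsOrtho U₀ ∧ ∀ n, lowPart (U₀ᵀ * M n * U₀) = 0

/-- The joint triangularization loss `L(U) = Σₙ ‖low(Uᵀ M̂ₙ U)‖²`. -/
def Loss {d N : ℕ} (Mh : Fin N → Mat d) (U : Mat d) : ℝ :=
  ∑ n, (frob (lowPart (Uᵀ * Mh n * U))) ^ 2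

/-- Stationary point of the loss on the orthogonal group: the Riemannian
gradient vanishes, i.e. all directional derivatives along skew directions vanish. -/
def IsStationaryLoss {d N : ℕ} (Mh : Fin N → Mat d) (U : Mat d) : Prop :=
  IsOrtho U ∧ ∀ X : Mat d, IsSkew X →
    deriv (fun t : ℝ => Loss Mh (U * matExp (t • X))) 0 = 0

/-- The operator `t̃ = P_low (1 ⊗ Aᵀ − A ⊗ 1) P_lowᵀ`. -/
def ttil {d k : ℕ} (P : Matrix (Fin k) (Fin d × Fin d) ℝ) (A : Mat d) :
    Matrix (Fin k) (Fin k) ℝ :=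
  P * ((1 : Mat d) ⊗ₖ Aᵀ - A ⊗ₖ (1 : Mat d)) * Pᵀ

/-- The joint eigengap `γ = min_{i<i'} Σₙ (Λ_{ni} − Λ_{ni'})²`. -/
def gapMin {d N : ℕ} (Λ : Fin N → Fin d → ℝ) : ℝ :=
  sInf {r | ∃ i i' : Fin d, i < i' ∧ r = ∑ n, (Λ n i - Λ n i') ^ 2}

/-- under the non-degeneracy condition there exists a linear
combination `M = Σₙ βₙ Mₙ` with `d` distinct real eigenvalues
(namely `λᵢ(M) = Σₙ βₙ Λ_{ni}`). -/
theorem exists_linear_combination_distinct_eigenvalues {d N : ℕ}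
    (V : Mat d) (hV : IsUnit V)
    (Λ : Fin N → Fin d → ℝ) (M : Fin N → Mat d)
    (hM : ∀ n, M n = V * Matrix.diagonal (Λ n) * V⁻¹)
    (hnd : ∀ i i' : Fin d, i ≠ i' → ∃ n, Λ n i ≠ Λ n i') :
    ∃ β : Fin N → ℝ,
      (∑ n, β n • M n) = V * Matrix.diagonal (fun i => ∑ n, β n * Λ n i) * V⁻¹ ∧
      Function.Injective fun i : Fin d => ∑ n, β n * Λ n i := by
  -- linear functionals whose kernels we must avoid
  set φ : {p : Fin d × Fin d // p.1 ≠ p.2} → ((Fin N → ℝ) →ₗ[ℝ] ℝ) :=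
    fun p => ∑ n : Fin N, (Λ n p.1.1 - Λ n p.1.2) • LinearMap.proj n with hφ
  have hker : ∀ p, LinearMap.ker (φ p) ≠ ⊤ := by
    intro p htop
    obtain ⟨n, hn⟩ := hnd p.1.1 p.1.2 p.2
    have : Pi.single n (1:ℝ) ∈ LinearMap.ker (φ p) := htop ▸ Submodule.mem_top
    rw [LinearMap.mem_ker, hφ] at this
    simp only [LinearMap.sum_apply, LinearMap.smul_apply, LinearMap.proj_apply,
      smul_eq_mul] at this
    rw [Finset.sum_eq_single n] at this
    · simp at this; exact hn (by linarith)
    · intro m _ hm; simp [Pi.single_apply, hm]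
    · simp
  have : ⋃ p, ((LinearMap.ker (φ p) : Submodule ℝ (Fin N → ℝ)) : Set (Fin N → ℝ))
      ≠ Set.univ := by
    intro h
    obtain ⟨p, hp⟩ := Subspace.exists_eq_top_of_iUnion_eq_univ h
    exact hker p hp
  obtain ⟨β, hβ⟩ := Set.ne_univ_iff_exists_notMem _ |>.mp this
  simp only [Set.mem_iUnion, not_exists, SetLike.mem_coe, LinearMap.mem_ker] at hβ
  refine ⟨β, ?_, ?_⟩
  · have hdiag : (∑ n, β n • Matrix.diagonal (Λ n))
        = Matrix.diagonal (fun i => ∑ n, β n * Λ n i) := by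
      ext i j
      simp only [Matrix.sum_apply, Matrix.smul_apply, Matrix.diagonal_apply, smul_eq_mul]
      by_cases h : i = j <;> simp [h, Matrix.diagonal_apply]
    calc (∑ n, β n • M n) = V * (∑ n, β n • Matrix.diagonal (Λ n)) * V⁻¹ := by
          rw [Finset.mul_sum, Finset.sum_mul]
          exact Finset.sum_congr rfl fun n _ => by
            rw [Matrix.mul_smul, Matrix.smul_mul, hM]
      _ = _ := by rw [hdiag]
  · intro i j hij
    by_contra hne
    have := hβ ⟨(i, j), hne⟩
    rw [hφ] at this
    simp only [LinearMap.sum_apply, LinearMap.smul_apply, LinearMap.proj_apply,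
      smul_eq_mul] at this
    have : ∑ n, β n * Λ n i - ∑ n, β n * Λ n j ≠ 0 := by
      rw [← Finset.sum_sub_distrib]
      convert this using 2 with n
      ring
    exact this (by simpa using sub_eq_zero.mpr hij)
end
end

section
/- Let A be an invertible upper-triangular real d×d matrix and Σ a real diagonal d×d matrix. Then, as d²×d² matrices, Low (A ⊗ A⁻ᵀ)(I ⊗ Σ − Σ ⊗ I)(A⁻¹ ⊗ Aᵀ) Low = Low (A ⊗ A⁻ᵀ) Low (I ⊗ Σ − Σ ⊗ I) Low (A⁻¹ ⊗ Aᵀ) Low, i.e. the projector onto strictly lower-triangular matrices can be inserted between the three factors. -/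
open Matrix Kronecker BigOperators

noncomputable section

/-- low-projector insertion identity for upper-triangular `A`
and diagonal `Σ`. -/
theorem low_insertion {d : ℕ} (A : Mat d) (hA : IsUnit A) (hAu : lowPart A = 0)
    (s : Fin d → ℝ) :
    lowOp d * (A ⊗ₖ (A⁻¹)ᵀ) *
        ((1 : Mat d) ⊗ₖ Matrix.diagonal s - Matrix.diagonal s ⊗ₖ (1 : Mat d)) *
        (A⁻¹ ⊗ₖ Aᵀ) * lowOp d =
      lowOp d * (A ⊗ₖ (A⁻¹)ᵀ) * lowOp d *
        ((1 : Mat d) ⊗ₖ Matrix.diagonal s - Matrix.diagonal s ⊗ₖ (1 : Mat d)) * lowOp d *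
        (A⁻¹ ⊗ₖ Aᵀ) * lowOp d := by
  haveI : Invertible A := hA.invertible
  have hAentry : ∀ i j : Fin d, (j : ℕ) < (i : ℕ) → A i j = 0 := by
    intro i j h
    have h2 := congrFun (congrFun hAu i) j
    simp only [lowPart, Matrix.of_apply, Matrix.zero_apply] at h2
    rwa [if_pos h] at h2
  have hBT : A.BlockTriangular (id : Fin d → Fin d) := by
    intro i j h
    exact hAentry i j h
  have hBTinv : (A⁻¹).BlockTriangular (id : Fin d → Fin d) :=
    Matrix.blockTriangular_inv_of_blockTriangular hBT
  have hAinv : ∀ i j : Fin d, (j : ℕ) < (i : ℕ) → A⁻¹ i j = 0 := by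
    intro i j h
    exact hBTinv h
  set D : Matrix (Fin d × Fin d) (Fin d × Fin d) ℝ :=
    (1 : Mat d) ⊗ₖ Matrix.diagonal s - Matrix.diagonal s ⊗ₖ (1 : Mat d) with hDdef
  set K' : Matrix (Fin d × Fin d) (Fin d × Fin d) ℝ := A⁻¹ ⊗ₖ Aᵀ with hKdef
  set K : Matrix (Fin d × Fin d) (Fin d × Fin d) ℝ := A ⊗ₖ (A⁻¹)ᵀ with hK2def
  set f : Fin d × Fin d → ℝ := fun p => if (p.1 : ℕ) < (p.2 : ℕ) then 1 else 0 with hf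
  have hLdiag : lowOp d = Matrix.diagonal f := rfl
  have hDdiag : D = Matrix.diagonal (fun p : Fin d × Fin d => s p.2 - s p.1) := by
    rw [hDdef]
    have h1 : (1 : Mat d) ⊗ₖ Matrix.diagonal s
        = Matrix.diagonal (fun p : Fin d × Fin d => s p.2) := by
      rw [show (1 : Mat d) = Matrix.diagonal (fun _ => (1:ℝ)) by simp,
        Matrix.diagonal_kronecker_diagonal]
      simp
    have h2 : Matrix.diagonal s ⊗ₖ (1 : Mat d)
        = Matrix.diagonal (fun p : Fin d × Fin d => s p.1) := by
      rw [show (1 : Mat d) = Matrix.diagonal (fun _ => (1:ℝ)) by simp,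
        Matrix.diagonal_kronecker_diagonal]
      simp
    rw [h1, h2, Matrix.diagonal_sub]
  have hcomm : lowOp d * D = D * lowOp d := by
    rw [hLdiag, hDdiag, Matrix.diagonal_mul_diagonal, Matrix.diagonal_mul_diagonal]
    exact congrArg Matrix.diagonal (funext fun p => by ring)
  have hF : lowOp d * (D * (K' * lowOp d)) = D * (K' * lowOp d) := by
    ext p q
    rw [hLdiag, Matrix.diagonal_mul, hf]
    beta_reduce
    by_cases hp : (p.1 : ℕ) < (p.2 : ℕ)
    · rw [if_pos hp, one_mul]
    · rw [if_neg hp, zero_mul]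
      symm
      rw [hDdiag, Matrix.diagonal_mul, Matrix.mul_diagonal]
      by_cases hq : (q.1 : ℕ) < (q.2 : ℕ)
      · have hK0 : K' p q = 0 := by
          rw [hKdef, Matrix.kroneckerMap_apply]
          rcases lt_or_ge (q.1 : ℕ) (p.1 : ℕ) with h1 | h1
          · rw [hAinv p.1 q.1 h1, zero_mul]
          · have h2 : (p.2 : ℕ) < (q.2 : ℕ) :=
              lt_of_le_of_lt (le_trans (not_lt.mp hp) h1) hq
            rw [Matrix.transpose_apply, hAentry q.2 p.2 h2, mul_zero]
        rw [hK0]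
        ring
      · rw [if_neg hq]
        ring
  have hF2 : D * (lowOp d * (K' * lowOp d)) = D * (K' * lowOp d) := by
    rw [← mul_assoc, ← hcomm, mul_assoc]
    exact hF
  simp only [mul_assoc]
  rw [hF2, hF]
end
end

section
/- Let A be an invertible upper-triangular real d×d matrix with real eigenvalues satisfying λ_i(A) ≠ λ_{i'}(A) for all i ≠ i'. Then the (d(d−1)/2)×(d(d−1)/2) matrix T_A = P_low (I ⊗ Aᵀ − A ⊗ I) P_lowᵀ is invertible; moreover, writing A = V diag(λ) V⁻¹ with V upper triangular, σ_min(T_A) ≥ (σ_min(V)/σ_max(V))² · min_{i<i'} |λ_i(A) − λ_{i'}(A)|. -/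
open Matrix Kronecker BigOperators

noncomputable section

/-- Stationary point of the loss on the orthogonal group: the Riemannian
gradient vanishes, i.e. all directional derivatives along skew directions vanish. -/
def IsStationary' {d N : ℕ} (Mh : Fin N → Mat d) (U : Mat d) : Prop :=
  IsOrtho U ∧ ∀ X : Mat d, IsSkew X →
    deriv (fun t : ℝ => Loss Mh (U * matExp (t • X))) 0 = 0

variable {m n p : Type*} [Fintype m] [Fintype n] [Fintype p]

lemma enorm_nonneg (v : m → ℝ) : 0 ≤ _root_.enorm v := Real.sqrt_nonneg _

lemma enorm_sq (v : m → ℝ) : _root_.enorm v ^ 2 = ∑ i, (v i) ^ 2 :=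
  Real.sq_sqrt (Finset.sum_nonneg fun i _ => sq_nonneg _)

lemma my_enorm_eq_zero {v : m → ℝ} (h : _root_.enorm v = 0) : v = 0 := by
  have h2 : ∑ i, (v i) ^ 2 = 0 := by
    have := enorm_sq v; rw [h] at this; simpa using this.symm
  funext i
  have := (Finset.sum_eq_zero_iff_of_nonneg (fun i _ => sq_nonneg (v i))).1 h2 i (Finset.mem_univ i)
  exact pow_eq_zero_iff (n := 2) (by norm_num) |>.1 this

lemma my_enorm_pos {v : m → ℝ} (h : v ≠ 0) : 0 < _root_.enorm v := by
  rcases lt_or_eq_of_le (enorm_nonneg v) with h' | h'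
  · exact h'
  · exact absurd (my_enorm_eq_zero h'.symm) h

lemma my_enorm_smul (c : ℝ) (v : m → ℝ) : _root_.enorm (c • v) = |c| * _root_.enorm v := by
  unfold _root_.enorm
  rw [← Real.sqrt_sq_eq_abs, ← Real.sqrt_mul (sq_nonneg c), Finset.mul_sum]
  congr 1; funext; congr 1; funext i; simp [mul_pow]

lemma dot_le_enorm_mul (v w : m → ℝ) : ∑ i, v i * w i ≤ _root_.enorm v * _root_.enorm w := by
  have := Finset.sum_mul_sq_le_sq_mul_sq Finset.univ v w
  have h1 : (∑ i, v i * w i) ^ 2 ≤ (_root_.enorm v * _root_.enorm w) ^ 2 := by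
    rw [mul_pow, enorm_sq, enorm_sq]; exact this
  have h2 : 0 ≤ _root_.enorm v * _root_.enorm w := mul_nonneg (enorm_nonneg _) (enorm_nonneg _)
  nlinarith [abs_le_of_sq_le_sq' h1 h2]

lemma enorm_mulVec_le_frob (A : Matrix m n ℝ) (x : n → ℝ) :
    _root_.enorm (A.mulVec x) ≤ frob A * _root_.enorm x := by
  have h : _root_.enorm (A.mulVec x) ^ 2 ≤ (frob A * _root_.enorm x) ^ 2 := by
    rw [enorm_sq, mul_pow]
    have hf : frob A ^ 2 = ∑ i, ∑ j, (A i j) ^ 2 :=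
      Real.sq_sqrt (Finset.sum_nonneg fun i _ => Finset.sum_nonneg fun j _ => sq_nonneg _)
    rw [hf, enorm_sq, Finset.sum_mul]
    apply Finset.sum_le_sum
    intro i _
    have := Finset.sum_mul_sq_le_sq_mul_sq Finset.univ (fun j => A i j) x
    simpa [Matrix.mulVec, dotProduct] using this
  have h2 : 0 ≤ frob A * _root_.enorm x := mul_nonneg (Real.sqrt_nonneg _) (enorm_nonneg _)
  nlinarith [enorm_nonneg (A.mulVec x), abs_le_of_sq_le_sq' h 
    (by positivity : (0:ℝ) ≤ frob A * _root_.enorm x)]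

lemma sigMax_bddAbove (A : Matrix m n ℝ) :
    BddAbove {r | ∃ x : n → ℝ, _root_.enorm x = 1 ∧ r = _root_.enorm (A.mulVec x)} := by
  refine ⟨frob A, fun r hr => ?_⟩
  obtain ⟨x, hx, rfl⟩ := hr
  calc _root_.enorm (A.mulVec x) ≤ frob A * _root_.enorm x := enorm_mulVec_le_frob A x
  _ = frob A := by rw [hx, mul_one]

lemma sigMin_bddBelow (A : Matrix m n ℝ) :
    BddBelow {r | ∃ x : n → ℝ, _root_.enorm x = 1 ∧ r = _root_.enorm (A.mulVec x)} := by
  refine ⟨0, fun r hr => ?_⟩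
  obtain ⟨x, hx, rfl⟩ := hr
  exact enorm_nonneg _

lemma enorm_mulVec_le_sigMax (A : Matrix m n ℝ) (x : n → ℝ) :
    _root_.enorm (A.mulVec x) ≤ sigMax A * _root_.enorm x := by
  rcases eq_or_ne x 0 with rfl | hx
  · simp [Matrix.mulVec_zero, _root_.enorm, Real.sqrt_eq_zero']
  · have hpos := my_enorm_pos hx
    have hmem : _root_.enorm (A.mulVec ((_root_.enorm x)⁻¹ • x)) ∈
        {r | ∃ y : n → ℝ, _root_.enorm y = 1 ∧ r = _root_.enorm (A.mulVec y)} := by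
      refine ⟨(_root_.enorm x)⁻¹ • x, ?_, rfl⟩
      rw [my_enorm_smul, abs_of_pos (by positivity), inv_mul_cancel₀ hpos.ne']
    have hle := le_csSup (sigMax_bddAbove A) hmem
    rw [Matrix.mulVec_smul, my_enorm_smul, abs_of_pos (by positivity)] at hle
    calc _root_.enorm (A.mulVec x) = _root_.enorm x * ((_root_.enorm x)⁻¹ * _root_.enorm (A.mulVec x)) := by
          field_simp
      _ ≤ _root_.enorm x * sigMax A := by
          apply mul_le_mul_of_nonneg_left _ hpos.le
          exact hle
      _ = sigMax A * _root_.enorm x := mul_comm _ _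

lemma sigMin_mul_enorm_le (A : Matrix m n ℝ) (x : n → ℝ) :
    sigMin A * _root_.enorm x ≤ _root_.enorm (A.mulVec x) := by
  rcases eq_or_ne x 0 with rfl | hx
  · simp [Matrix.mulVec_zero, _root_.enorm, Real.sqrt_eq_zero']
  · have hpos := my_enorm_pos hx
    have hmem : _root_.enorm (A.mulVec ((_root_.enorm x)⁻¹ • x)) ∈
        {r | ∃ y : n → ℝ, _root_.enorm y = 1 ∧ r = _root_.enorm (A.mulVec y)} := by
      refine ⟨(_root_.enorm x)⁻¹ • x, ?_, rfl⟩
      rw [my_enorm_smul, abs_of_pos (by positivity), inv_mul_cancel₀ hpos.ne']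
    have hle := csInf_le (sigMin_bddBelow A) hmem
    rw [Matrix.mulVec_smul, my_enorm_smul, abs_of_pos (by positivity)] at hle
    calc sigMin A * _root_.enorm x ≤ ((_root_.enorm x)⁻¹ * _root_.enorm (A.mulVec x)) * _root_.enorm x :=
          mul_le_mul_of_nonneg_right hle hpos.le
      _ = _root_.enorm (A.mulVec x) := by field_simp

lemma sigMax_nonneg (A : Matrix m n ℝ) : 0 ≤ sigMax A :=
  Real.sSup_nonneg (by rintro r ⟨x, hx, rfl⟩; exact enorm_nonneg _)

lemma sigMin_nonneg (A : Matrix m n ℝ) : 0 ≤ sigMin A :=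
  Real.sInf_nonneg (by rintro r ⟨x, hx, rfl⟩; exact enorm_nonneg _)

lemma enorm_sq_eq_dot (v : m → ℝ) : _root_.enorm v ^ 2 = v ⬝ᵥ v := by
  rw [enorm_sq]; simp [dotProduct, sq]

lemma sigMax_transpose_le (A : Matrix m n ℝ) : sigMax Aᵀ ≤ sigMax A := by
  apply Real.sSup_le _ (sigMax_nonneg A)
  rintro r ⟨x, hx, rfl⟩
  set w := Aᵀ.mulVec x with hw
  have key : _root_.enorm w ^ 2 ≤ sigMax A * _root_.enorm w := by
    rw [enorm_sq_eq_dot]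
    have h1 : w ⬝ᵥ w = x ⬝ᵥ (A.mulVec w) := by
      rw [hw, Matrix.mulVec_transpose, dotProduct_mulVec]
    rw [h1]
    calc x ⬝ᵥ A.mulVec w ≤ _root_.enorm x * _root_.enorm (A.mulVec w) :=
          dot_le_enorm_mul _ _
      _ = _root_.enorm (A.mulVec w) := by rw [hx, one_mul]
      _ ≤ sigMax A * _root_.enorm w := enorm_mulVec_le_sigMax A w
  rcases eq_or_lt_of_le (enorm_nonneg w) with h0 | h0
  · rw [← h0]; exact sigMax_nonneg A
  · nlinarith [key]

lemma frob_nonneg (A : Matrix m n ℝ) : 0 ≤ frob A := Real.sqrt_nonneg _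

lemma frob_sq (A : Matrix m n ℝ) : frob A ^ 2 = ∑ i, ∑ j, (A i j) ^ 2 :=
  Real.sq_sqrt (Finset.sum_nonneg fun i _ => Finset.sum_nonneg fun j _ => sq_nonneg _)

lemma frob_transpose (A : Matrix m n ℝ) : frob Aᵀ = frob A := by
  unfold frob
  rw [Finset.sum_comm]
  rfl

lemma frob_sq_eq_sum_cols (A : Matrix m n ℝ) :
    frob A ^ 2 = ∑ j, _root_.enorm (fun i => A i j) ^ 2 := by
  rw [frob_sq, Finset.sum_comm]
  exact Finset.sum_congr rfl fun j _ => (enorm_sq _).symm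

lemma le_frob_of_sq_le_sq {c : ℝ} (hc : 0 ≤ c) (A : Matrix m n ℝ)
    (h : c ^ 2 ≤ frob A ^ 2) : c ≤ frob A := by
  nlinarith [frob_nonneg A]

lemma frob_mul_left_ge {c : ℝ} (hc : 0 ≤ c) (M : Matrix m n ℝ) (Z : Matrix n p ℝ)
    (h : ∀ v : n → ℝ, c * _root_.enorm v ≤ _root_.enorm (M.mulVec v)) :
    c * frob Z ≤ frob (M * Z) := by
  apply le_frob_of_sq_le_sq (mul_nonneg hc (frob_nonneg Z))
  rw [mul_pow, frob_sq_eq_sum_cols, frob_sq_eq_sum_cols, Finset.mul_sum]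
  apply Finset.sum_le_sum
  intro j _
  have hcol : (fun i => (M * Z) i j) = M.mulVec (fun i => Z i j) := by
    funext i; simp [Matrix.mul_apply, Matrix.mulVec, dotProduct]
  rw [hcol, ← mul_pow]
  have := h (fun i => Z i j)
  nlinarith [this, mul_nonneg hc (enorm_nonneg (fun i : n => Z i j)), enorm_nonneg (M.mulVec (fun i => Z i j))]

lemma frob_mul_right_ge {c : ℝ} (hc : 0 ≤ c) (Z : Matrix p n ℝ) (N : Matrix n m ℝ)
    (h : ∀ v : n → ℝ, c * _root_.enorm v ≤ _root_.enorm (Nᵀ.mulVec v)) :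
    c * frob Z ≤ frob (Z * N) := by
  rw [← frob_transpose (Z * N), Matrix.transpose_mul, ← frob_transpose Z]
  exact frob_mul_left_ge hc Nᵀ Zᵀ h

section Square
variable {n : Type*} [Fintype n] [DecidableEq n]

lemma sigMax_pos [Nonempty n] {M : Matrix n n ℝ} (hM : IsUnit M) : 0 < sigMax M := by
  obtain ⟨i0⟩ := ‹Nonempty n›
  set e : n → ℝ := fun i => if i = i0 then 1 else 0 with he
  have henorm : _root_.enorm e = 1 := by
    rw [_root_.enorm, Finset.sum_eq_single i0]
    · simp [he]
    · intro b _ hb; simp [he, hb]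
    · intro h; exact absurd (Finset.mem_univ i0) h
  have hne : M.mulVec e ≠ 0 := by
    intro h0
    have hinj := Matrix.mulVec_injective_iff_isUnit.2 hM
    have : e = 0 := hinj (by rw [h0, Matrix.mulVec_zero])
    have := congrFun this i0
    simp [he] at this
  have hmem : _root_.enorm (M.mulVec e) ∈
      {r | ∃ x : n → ℝ, _root_.enorm x = 1 ∧ r = _root_.enorm (M.mulVec x)} := ⟨e, henorm, rfl⟩
  exact lt_of_lt_of_le (my_enorm_pos hne) (le_csSup (sigMax_bddAbove M) hmem)

lemma enorm_le_sigMax_mul_inv {M : Matrix n n ℝ} (hM : IsUnit M) (v : n → ℝ) :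
    _root_.enorm v ≤ sigMax M * _root_.enorm (M⁻¹.mulVec v) := by
  have h1 : M.mulVec (M⁻¹.mulVec v) = v := by
    rw [Matrix.mulVec_mulVec, Matrix.mul_nonsing_inv _ ((Matrix.isUnit_iff_isUnit_det M).1 hM),
      Matrix.one_mulVec]
  calc _root_.enorm v = _root_.enorm (M.mulVec (M⁻¹.mulVec v)) := by rw [h1]
    _ ≤ sigMax M * _root_.enorm (M⁻¹.mulVec v) := enorm_mulVec_le_sigMax _ _

lemma sigMin_pos [Nonempty n] {M : Matrix n n ℝ} (hM : IsUnit M) : 0 < sigMin M := by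
  have hMinv : IsUnit M⁻¹ := Matrix.isUnit_nonsing_inv_iff.2 hM
  have hSpos : 0 < sigMax M⁻¹ := sigMax_pos hMinv
  have hinv2 : M⁻¹⁻¹ = M := Matrix.nonsing_inv_nonsing_inv _ ((Matrix.isUnit_iff_isUnit_det M).1 hM)
  have hne : {r | ∃ x : n → ℝ, _root_.enorm x = 1 ∧ r = _root_.enorm (M.mulVec x)}.Nonempty := by
    obtain ⟨i0⟩ := ‹Nonempty n›
    set e : n → ℝ := fun i => if i = i0 then 1 else 0 with he
    have henorm : _root_.enorm e = 1 := by
      rw [_root_.enorm, Finset.sum_eq_single i0]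
      · simp [he]
      · intro b _ hb; simp [he, hb]
      · intro h; exact absurd (Finset.mem_univ i0) h
    exact ⟨_, e, henorm, rfl⟩
  have hlow : ∀ r ∈ {r | ∃ x : n → ℝ, _root_.enorm x = 1 ∧ r = _root_.enorm (M.mulVec x)},
      (sigMax M⁻¹)⁻¹ ≤ r := by
    rintro r ⟨x, hx, rfl⟩
    have h1 : _root_.enorm x ≤ sigMax M⁻¹ * _root_.enorm (M.mulVec x) := by
      have := enorm_le_sigMax_mul_inv hMinv x
      rwa [hinv2] at this
    rw [hx] at h1
    nlinarith [h1, hSpos, mul_inv_cancel₀ hSpos.ne']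
  have := le_csInf hne hlow
  exact lt_of_lt_of_le (inv_pos.2 hSpos) this

lemma sigMin_mul_le_transpose {M : Matrix n n ℝ} (hM : IsUnit M) (x : n → ℝ) :
    sigMin M * _root_.enorm x ≤ _root_.enorm (Mᵀ.mulVec x) := by
  rcases eq_or_ne x 0 with rfl | hx
  · simp [Matrix.mulVec_zero, _root_.enorm, Real.sqrt_eq_zero']
  have hdet := (Matrix.isUnit_iff_isUnit_det M).1 hM
  have hxpos := my_enorm_pos hx
  have h1 : _root_.enorm x ^ 2 ≤ _root_.enorm (Mᵀ.mulVec x) * _root_.enorm (M⁻¹.mulVec x) := by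
    have hid : x ⬝ᵥ x = (Mᵀ.mulVec x) ⬝ᵥ (M⁻¹.mulVec x) := by
      rw [Matrix.mulVec_transpose]
      rw [← dotProduct_mulVec, Matrix.mulVec_mulVec,
        Matrix.mul_nonsing_inv _ hdet, Matrix.one_mulVec]
    rw [enorm_sq_eq_dot, hid]
    exact dot_le_enorm_mul _ _
  have h2 : sigMin M * _root_.enorm (M⁻¹.mulVec x) ≤ _root_.enorm x := by
    have := sigMin_mul_enorm_le M (M⁻¹.mulVec x)
    rwa [Matrix.mulVec_mulVec, Matrix.mul_nonsing_inv _ hdet, Matrix.one_mulVec] at this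
  nlinarith [sigMin_nonneg M, enorm_nonneg (Mᵀ.mulVec x), enorm_nonneg (M⁻¹.mulVec x), hxpos]

lemma inv_sigMax_mul_le_inv {M : Matrix n n ℝ} (hM : IsUnit M) [Nonempty n] (v : n → ℝ) :
    (sigMax M)⁻¹ * _root_.enorm v ≤ _root_.enorm (M⁻¹.mulVec v) := by
  have hS := sigMax_pos hM
  have := enorm_le_sigMax_mul_inv hM v
  rw [inv_mul_le_iff₀ hS]
  linarith

lemma inv_sigMax_mul_le_inv_transpose {M : Matrix n n ℝ} (hM : IsUnit M) [Nonempty n] (v : n → ℝ) :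
    (sigMax M)⁻¹ * _root_.enorm v ≤ _root_.enorm ((M⁻¹)ᵀ.mulVec v) := by
  have hS := sigMax_pos hM
  rw [inv_mul_le_iff₀ hS]
  have h1 : _root_.enorm (Mᵀ.mulVec ((M⁻¹)ᵀ.mulVec v)) = _root_.enorm v := by
    rw [Matrix.mulVec_mulVec, ← Matrix.transpose_mul,
      Matrix.nonsing_inv_mul _ ((Matrix.isUnit_iff_isUnit_det M).1 hM)]
    simp
  calc _root_.enorm v = _root_.enorm (Mᵀ.mulVec ((M⁻¹)ᵀ.mulVec v)) := h1.symm
    _ ≤ sigMax Mᵀ * _root_.enorm ((M⁻¹)ᵀ.mulVec v) := enorm_mulVec_le_sigMax _ _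
    _ ≤ sigMax M * _root_.enorm ((M⁻¹)ᵀ.mulVec v) :=
        mul_le_mul_of_nonneg_right (sigMax_transpose_le M) (enorm_nonneg _)

end Square

section Tri
variable {d : ℕ}

/-- upper triangular -/
def Up (A : Mat d) : Prop := ∀ i j : Fin d, (j : ℕ) < (i : ℕ) → A i j = 0
/-- lower triangular -/
def LowT (A : Mat d) : Prop := ∀ i j : Fin d, (i : ℕ) < (j : ℕ) → A i j = 0
/-- strictly lower triangular -/
def SLow (A : Mat d) : Prop := ∀ i j : Fin d, (i : ℕ) ≤ (j : ℕ) → A i j = 0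

lemma up_of_lowPart_eq_zero {A : Mat d} (h : lowPart A = 0) : Up A := by
  intro i j hij
  have h2 : (if (j:ℕ) < (i:ℕ) then A i j else 0) = 0 := congrFun (congrFun h i) j
  rwa [if_pos hij] at h2

lemma lowT_transpose {A : Mat d} (h : Up A) : LowT Aᵀ := fun i j hij => h j i hij

lemma slow_mul_left {B X : Mat d} (hB : LowT B) (hX : SLow X) : SLow (B * X) := by
  intro i j hij
  rw [Matrix.mul_apply]
  apply Finset.sum_eq_zero
  intro k _
  rcases le_or_gt (k : ℕ) (j : ℕ) with h | h
  · rw [hX k j h, mul_zero]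
  · rw [hB i k (lt_of_le_of_lt hij h), zero_mul]

lemma slow_mul_right {X B : Mat d} (hX : SLow X) (hB : LowT B) : SLow (X * B) := by
  intro i j hij
  rw [Matrix.mul_apply]
  apply Finset.sum_eq_zero
  intro k _
  rcases le_or_gt (i : ℕ) (k : ℕ) with h | h
  · rw [hX i k h, zero_mul]
  · rw [hB k j (lt_of_lt_of_le h hij), mul_zero]

lemma slow_sub {X Y : Mat d} (hX : SLow X) (hY : SLow Y) : SLow (X - Y) := by
  intro i j hij
  simp [Matrix.sub_apply, hX i j hij, hY i j hij]

lemma up_inv {V : Mat d} (hV : IsUnit V) (hVu : Up V) : Up V⁻¹ := by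
  have hdet := (Matrix.isUnit_iff_isUnit_det V).1 hV
  haveI := V.invertibleOfIsUnitDet hdet
  have hbt : V.BlockTriangular (id : Fin d → Fin d) := by
    intro i j hij
    exact hVu i j (by exact_mod_cast hij)
  have := Matrix.blockTriangular_inv_of_blockTriangular hbt
  intro i j hij
  exact this (show (id j : Fin d) < id i from by exact_mod_cast hij)

/-- Kronecker action on vectorization. -/
lemma kron_mulVec (B C X : Mat d) :
    (B ⊗ₖ C).mulVec (vecM X) = vecM (C * X * Bᵀ) := by
  funext p
  obtain ⟨a, b⟩ := p
  simp only [Matrix.mulVec, dotProduct, vecM, Matrix.mul_apply,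
    Matrix.kroneckerMap_apply, Matrix.transpose_apply, Fintype.sum_prod_type,
    Finset.sum_mul]
  apply Finset.sum_congr rfl; intro c _
  apply Finset.sum_congr rfl; intro j _
  ring

lemma vecM_matM (v : Fin d × Fin d → ℝ) : vecM (matM v) = v := by
  funext p; obtain ⟨a,b⟩ := p; rfl

lemma vecM_sub (X Y : Mat d) : vecM (X - Y) = vecM X - vecM Y := by
  funext p; simp [vecM, Matrix.sub_apply]

lemma enorm_vecM (X : Mat d) : _root_.enorm (vecM X) = frob X := by
  unfold _root_.enorm frob
  congr 1
  rw [Fintype.sum_prod_type, Finset.sum_comm]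
  rfl

lemma lowOp_fix_of_slow {X : Mat d} (hX : SLow X) : (lowOp d).mulVec (vecM X) = vecM X := by
  funext p
  obtain ⟨a, b⟩ := p
  rw [lowOp, Matrix.mulVec_diagonal]
  rcases lt_or_ge (a : ℕ) (b : ℕ) with h | h
  · simp [h]
  · simp only [vecM]
    rw [hX b a h]
    simp

lemma slow_of_lowOp_fix {v : Fin d × Fin d → ℝ} (h : (lowOp d).mulVec v = v) :
    SLow (matM v) := by
  intro i j hij
  have := congrFun h (j, i)
  rw [lowOp, Matrix.mulVec_diagonal] at this
  have hnot : ¬ ((j:ℕ) < (i:ℕ)) := not_lt.2 hij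
  simp only [hnot, if_false, zero_mul] at this
  exact this.symm

end Tri

section Proj
variable {d k : ℕ} {P : Matrix (Fin k) (Fin d × Fin d) ℝ}

lemma enorm_Pt_mulVec (hP : IsPlow P) (y : Fin k → ℝ) :
    _root_.enorm (Pᵀ.mulVec y) = _root_.enorm y := by
  unfold _root_.enorm
  congr 1
  have h1 : ∑ i, (Pᵀ.mulVec y i) ^ 2 = (Pᵀ.mulVec y) ⬝ᵥ (Pᵀ.mulVec y) := by
    simp [dotProduct, sq]
  have h2 : ∑ i, (y i) ^ 2 = y ⬝ᵥ y := by simp [dotProduct, sq]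
  rw [h1, h2, dotProduct_mulVec, ← Matrix.mulVec_transpose Pᵀ,
    Matrix.transpose_transpose, Matrix.mulVec_mulVec, hP.1, Matrix.one_mulVec]

lemma lowOp_fix_Pt (hP : IsPlow P) (y : Fin k → ℝ) :
    (lowOp d).mulVec (Pᵀ.mulVec y) = Pᵀ.mulVec y := by
  rw [Matrix.mulVec_mulVec, ← hP.2, Matrix.mul_assoc, hP.1, Matrix.mul_one]

lemma enorm_P_mulVec (hP : IsPlow P) {z : Fin d × Fin d → ℝ}
    (hz : (lowOp d).mulVec z = z) : _root_.enorm (P.mulVec z) = _root_.enorm z := by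
  unfold _root_.enorm
  congr 1
  have h1 : ∑ i, (P.mulVec z i) ^ 2 = (P.mulVec z) ⬝ᵥ (P.mulVec z) := by
    simp [dotProduct, sq]
  have h2 : ∑ i, (z i) ^ 2 = z ⬝ᵥ z := by simp [dotProduct, sq]
  rw [h1, h2, dotProduct_mulVec, ← Matrix.mulVec_transpose P,
    Matrix.mulVec_mulVec, hP.2]
  rw [hz]

end Proj

section Gap
variable {d : ℕ}

lemma gap_nonneg (A : Mat d) :
    0 ≤ sInf {r | ∃ i i' : Fin d, i < i' ∧ r = |A i i - A i' i'|} :=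
  Real.sInf_nonneg (by rintro r ⟨i, i', _, rfl⟩; exact abs_nonneg _)

lemma gap_le (A : Mat d) {i i' : Fin d} (h : i < i') :
    sInf {r | ∃ i i' : Fin d, i < i' ∧ r = |A i i - A i' i'|} ≤ |A i i - A i' i'| := by
  apply csInf_le ⟨0, by rintro r ⟨a, b, _, rfl⟩; exact abs_nonneg _⟩
  exact ⟨i, i', h, rfl⟩

lemma gap_pos (A : Mat d) (hd : 2 ≤ d) (hdist : ∀ i j : Fin d, i ≠ j → A i i ≠ A j j) :
    0 < sInf {r | ∃ i i' : Fin d, i < i' ∧ r = |A i i - A i' i'|} := by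
  set G := {r | ∃ i i' : Fin d, i < i' ∧ r = |A i i - A i' i'|} with hG
  have hfin : G.Finite := by
    have : G ⊆ (fun p : Fin d × Fin d => |A p.1 p.1 - A p.2 p.2|) '' Set.univ := by
      rintro r ⟨i, i', _, rfl⟩; exact ⟨(i, i'), Set.mem_univ _, rfl⟩
    exact Set.Finite.subset (Set.finite_univ.image _) this
  have hne : G.Nonempty := by
    refine ⟨_, ⟨0, by omega⟩, ⟨1, by omega⟩, ?_, rfl⟩
    exact Fin.mk_lt_mk.2 (by omega)
  have hmem := hne.csInf_mem hfin
  obtain ⟨i, i', hlt, heq⟩ := hmem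
  rw [heq]
  exact abs_pos.2 (sub_ne_zero.2 (hdist i i' hlt.ne))

lemma frob_diag_comm_ge {d : ℕ} (A : Mat d) {Y : Mat d} (hY : SLow Y) :
    sInf {r | ∃ i i' : Fin d, i < i' ∧ r = |A i i - A i' i'|} * frob Y ≤
      frob (Matrix.diagonal (fun i => A i i) * Y - Y * Matrix.diagonal (fun i => A i i)) := by
  set γ := sInf {r | ∃ i i' : Fin d, i < i' ∧ r = |A i i - A i' i'|} with hγ
  have hγ0 : 0 ≤ γ := gap_nonneg A
  apply le_frob_of_sq_le_sq (mul_nonneg hγ0 (frob_nonneg Y))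
  rw [mul_pow, frob_sq, frob_sq, Finset.mul_sum]
  apply Finset.sum_le_sum
  intro i _
  rw [Finset.mul_sum]
  apply Finset.sum_le_sum
  intro j _
  have hent : (Matrix.diagonal (fun i => A i i) * Y - Y * Matrix.diagonal (fun i => A i i)) i j
      = (A i i - A j j) * Y i j := by
    rw [Matrix.sub_apply, Matrix.diagonal_mul, Matrix.mul_diagonal]
    ring
  rw [hent, mul_pow]
  rcases le_or_gt (i : ℕ) (j : ℕ) with h | h
  · rw [hY i j h]
    simp
  · have hji : j < i := by rwa [Fin.lt_def]
    have h1 : γ ≤ |A j j - A i i| := gap_le A hji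
    have h2 : γ ^ 2 ≤ (A i i - A j j) ^ 2 := by
      have := abs_nonneg (A j j - A i i)
      nlinarith [sq_abs (A j j - A i i)]
    exact mul_le_mul_of_nonneg_right h2 (sq_nonneg _)

end Gap

section Main
variable {d k : ℕ}

lemma master (hd : 2 ≤ d) (A : Mat d) (hAu : lowPart A = 0)
    (P : Matrix (Fin k) (Fin d × Fin d) ℝ) (hP : IsPlow P)
    (V : Mat d) (hV : IsUnit V) (hVu : lowPart V = 0)
    (hAV : A = V * Matrix.diagonal (fun i => A i i) * V⁻¹) (y : Fin k → ℝ) :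
    (sigMin V / sigMax V) ^ 2 *
        sInf {r | ∃ i i' : Fin d, i < i' ∧ r = |A i i - A i' i'|} * _root_.enorm y ≤
      _root_.enorm ((P * ((1 : Mat d) ⊗ₖ Aᵀ - A ⊗ₖ (1 : Mat d)) * Pᵀ).mulVec y) := by
  haveI : Nonempty (Fin d) := ⟨⟨0, by omega⟩⟩
  have hdet := (Matrix.isUnit_iff_isUnit_det V).1 hV
  set s := sigMin V with hsdef
  set S := sigMax V with hSdef
  set γ := sInf {r | ∃ i i' : Fin d, i < i' ∧ r = |A i i - A i' i'|} with hγdef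
  have hs : 0 < s := sigMin_pos hV
  have hS : 0 < S := sigMax_pos hV
  have hγ0 : 0 ≤ γ := gap_nonneg A
  set D := Matrix.diagonal (fun i => A i i) with hDdef
  set x := Pᵀ.mulVec y with hxdef
  set X := matM x with hXdef
  have hxX : vecM X = x := vecM_matM x
  have hXs : SLow X := slow_of_lowOp_fix (lowOp_fix_Pt hP y)
  have hAup : Up A := up_of_lowPart_eq_zero hAu
  have hVup : Up V := up_of_lowPart_eq_zero hVu
  set M := (1 : Mat d) ⊗ₖ Aᵀ - A ⊗ₖ (1 : Mat d) with hMdef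
  set C := Aᵀ * X - X * Aᵀ with hCdef
  have hCs : SLow C := slow_sub
    (slow_mul_left (lowT_transpose hAup) hXs) (slow_mul_right hXs (lowT_transpose hAup))
  have hMx : M.mulVec x = vecM C := by
    rw [← hxX, hMdef, Matrix.sub_mulVec, kron_mulVec, kron_mulVec, hCdef, vecM_sub]
    simp
  have hT : (P * M * Pᵀ).mulVec y = P.mulVec (vecM C) := by
    rw [← Matrix.mulVec_mulVec, ← Matrix.mulVec_mulVec, ← hxdef, hMx]
  have henT : _root_.enorm ((P * M * Pᵀ).mulVec y) = frob C := by
    rw [hT, enorm_P_mulVec hP (lowOp_fix_of_slow hCs), enorm_vecM]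
  have hfX : frob X = _root_.enorm y := by
    rw [← enorm_vecM, hxX, hxdef, enorm_Pt_mulVec hP]
  -- conjugation
  have e1 : (V⁻¹)ᵀ * Vᵀ = 1 := by
    rw [← Matrix.transpose_mul, Matrix.mul_nonsing_inv _ hdet, Matrix.transpose_one]
  have hAt : Aᵀ = (V⁻¹)ᵀ * (D * Vᵀ) := by
    conv_lhs => rw [hAV]
    rw [Matrix.transpose_mul, Matrix.transpose_mul, Matrix.diagonal_transpose, ← hDdef]
  set Y := Vᵀ * X * (V⁻¹)ᵀ with hYdef
  have hYs : SLow Y := slow_mul_right (slow_mul_left (lowT_transpose hVup) hXs)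
    (lowT_transpose (up_inv hV hVup))
  have key : C = (V⁻¹)ᵀ * ((D * Y - Y * D) * Vᵀ) := by
    rw [hCdef, hAt, hYdef]
    simp only [Matrix.mul_sub, Matrix.sub_mul, Matrix.mul_assoc]
    rw [e1]
    simp only [Matrix.mul_one]
    congr 1
    rw [← Matrix.mul_assoc ((V⁻¹)ᵀ) (Vᵀ) _, e1, Matrix.one_mul]
  -- chain of estimates
  have c4 : S⁻¹ * frob ((D * Y - Y * D) * Vᵀ) ≤ frob ((V⁻¹)ᵀ * ((D * Y - Y * D) * Vᵀ)) :=
    frob_mul_left_ge (inv_nonneg.2 hS.le) _ _ (fun v => inv_sigMax_mul_le_inv_transpose hV v)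
  have c5 : s * frob (D * Y - Y * D) ≤ frob ((D * Y - Y * D) * Vᵀ) :=
    frob_mul_right_ge hs.le _ _ (fun v => by
      rw [Matrix.transpose_transpose]; exact sigMin_mul_enorm_le V v)
  have c1 : γ * frob Y ≤ frob (D * Y - Y * D) := frob_diag_comm_ge A hYs
  have c2 : s * frob (X * (V⁻¹)ᵀ) ≤ frob Y := by
    rw [hYdef, Matrix.mul_assoc]
    exact frob_mul_left_ge hs.le _ _ (fun v => sigMin_mul_le_transpose hV v)
  have c3 : S⁻¹ * frob X ≤ frob (X * (V⁻¹)ᵀ) :=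
    frob_mul_right_ge (inv_nonneg.2 hS.le) _ _ (fun v => by
      rw [Matrix.transpose_transpose]; exact inv_sigMax_mul_le_inv hV v)
  have hfY : s * (S⁻¹ * _root_.enorm y) ≤ frob Y := by
    calc s * (S⁻¹ * _root_.enorm y) = s * (S⁻¹ * frob X) := by rw [hfX]
      _ ≤ s * frob (X * (V⁻¹)ᵀ) := mul_le_mul_of_nonneg_left c3 hs.le
      _ ≤ frob Y := c2
  have hfinal : S⁻¹ * (s * (γ * (s * (S⁻¹ * _root_.enorm y)))) ≤ frob C := by
    calc S⁻¹ * (s * (γ * (s * (S⁻¹ * _root_.enorm y))))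
        ≤ S⁻¹ * (s * (γ * frob Y)) := by
          apply mul_le_mul_of_nonneg_left _ (inv_nonneg.2 hS.le)
          apply mul_le_mul_of_nonneg_left _ hs.le
          exact mul_le_mul_of_nonneg_left hfY hγ0
      _ ≤ S⁻¹ * (s * frob (D * Y - Y * D)) := by
          apply mul_le_mul_of_nonneg_left _ (inv_nonneg.2 hS.le)
          exact mul_le_mul_of_nonneg_left c1 hs.le
      _ ≤ S⁻¹ * frob ((D * Y - Y * D) * Vᵀ) :=
          mul_le_mul_of_nonneg_left c5 (inv_nonneg.2 hS.le)
      _ ≤ frob ((V⁻¹)ᵀ * ((D * Y - Y * D) * Vᵀ)) := c4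
      _ = frob C := by rw [← key]
  rw [henT]
  calc (s / S) ^ 2 * γ * _root_.enorm y = S⁻¹ * (s * (γ * (s * (S⁻¹ * _root_.enorm y)))) := by
        field_simp
    _ ≤ frob C := hfinal

end Main

lemma exists_enorm_one {n : Type*} [Fintype n] [DecidableEq n] [Nonempty n] :
    ∃ e : n → ℝ, _root_.enorm e = 1 := by
  obtain ⟨i0⟩ := ‹Nonempty n›
  refine ⟨fun i => if i = i0 then 1 else 0, ?_⟩
  rw [_root_.enorm, Finset.sum_eq_single i0]
  · simp
  · intro b _ hb; simp [hb]
  · intro h; exact absurd (Finset.mem_univ i0) h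

lemma enorm_zero' {n : Type*} [Fintype n] : _root_.enorm (0 : n → ℝ) = 0 := by
  simp [_root_.enorm]


/-- for an invertible upper-triangular `A` with distinct (real)
eigenvalues (its diagonal entries), the matrix
`T_A = P_low (1 ⊗ Aᵀ − A ⊗ 1) P_lowᵀ` is invertible, and its smallest singular
value is bounded below via any upper-triangular eigenvector matrix `V`. -/
theorem TA_invertible {d k : ℕ} (hk : 2 * k = d * (d - 1))
    (A : Mat d) (hA : IsUnit A) (hAu : lowPart A = 0)
    (hdist : ∀ i j : Fin d, i ≠ j → A i i ≠ A j j)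
    (P : Matrix (Fin k) (Fin d × Fin d) ℝ) (hP : IsPlow P)
    (V : Mat d) (hV : IsUnit V) (hVu : lowPart V = 0)
    (hAV : A = V * Matrix.diagonal (fun i => A i i) * V⁻¹) :
    IsUnit (P * ((1 : Mat d) ⊗ₖ Aᵀ - A ⊗ₖ (1 : Mat d)) * Pᵀ) ∧
    (sigMin V / sigMax V) ^ 2 *
        sInf {r | ∃ i i' : Fin d, i < i' ∧ r = |A i i - A i' i'|} ≤
      sigMin (P * ((1 : Mat d) ⊗ₖ Aᵀ - A ⊗ₖ (1 : Mat d)) * Pᵀ) := by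
  set T := P * ((1 : Mat d) ⊗ₖ Aᵀ - A ⊗ₖ (1 : Mat d)) * Pᵀ with hTdef
  rcases Nat.eq_zero_or_pos k with hk0 | hkpos
  · subst hk0
    constructor
    · haveI : Subsingleton (Matrix (Fin 0) (Fin 0) ℝ) :=
        ⟨fun a b => by ext i; exact i.elim0⟩
      exact isUnit_of_subsingleton T
    · have hset : {r | ∃ x : Fin 0 → ℝ, _root_.enorm x = 1 ∧ r = _root_.enorm (T.mulVec x)} = ∅ := by
        ext r
        simp only [Set.mem_setOf_eq, Set.mem_empty_iff_false, iff_false, not_exists]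
        intro x ⟨hx, _⟩
        have : _root_.enorm x = 0 := by simp [_root_.enorm]
        rw [this] at hx; norm_num at hx
      have hgap : {r | ∃ i i' : Fin d, i < i' ∧ r = |A i i - A i' i'|} = ∅ := by
        have hd1 : d ≤ 1 := by
          by_contra h
          push_neg at h
          have : 2 ≤ d * (d - 1) := by
            have h2 : 2 ≤ d := h
            calc 2 = 2 * 1 := by ring
              _ ≤ d * (d - 1) := Nat.mul_le_mul h2 (by omega)
          omega
        ext r
        simp only [Set.mem_setOf_eq, Set.mem_empty_iff_false, iff_false, not_exists]
        intro i i' ⟨hlt, _⟩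
        have := i.2; have := i'.2
        omega
      have hT0 : sigMin T = 0 := by unfold sigMin; rw [hset, Real.sInf_empty]
      rw [hgap, Real.sInf_empty, mul_zero, hT0]
  · have hd : 2 ≤ d := by
      by_contra h
      push_neg at h
      have h01 : d = 0 ∨ d = 1 := by omega
      have h9 : d * (d - 1) = 0 := by rcases h01 with h' | h' <;> simp [h']
      omega
    have hmaster := master hd A hAu P hP V hV hVu hAV
    rw [← hTdef] at hmaster
    haveI : Nonempty (Fin d) := ⟨⟨0, by omega⟩⟩
    haveI : Nonempty (Fin k) := ⟨⟨0, by omega⟩⟩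
    have hγ : 0 < sInf {r | ∃ i i' : Fin d, i < i' ∧ r = |A i i - A i' i'|} :=
      gap_pos A hd hdist
    have hs : 0 < sigMin V := sigMin_pos hV
    have hS : 0 < sigMax V := sigMax_pos hV
    have hc : 0 < (sigMin V / sigMax V) ^ 2 *
        sInf {r | ∃ i i' : Fin d, i < i' ∧ r = |A i i - A i' i'|} := by positivity
    constructor
    · apply Matrix.mulVec_injective_iff_isUnit.1
      intro a b hab
      have hzero : T.mulVec (a - b) = 0 := by
        rw [Matrix.mulVec_sub, hab, sub_self]
      have h1 := hmaster (a - b)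
      rw [hzero, enorm_zero'] at h1
      have h2 : _root_.enorm (a - b) ≤ 0 := by nlinarith [enorm_nonneg (a - b)]
      have h3 : a - b = 0 := my_enorm_eq_zero (le_antisymm h2 (enorm_nonneg _))
      exact sub_eq_zero.1 h3
    · apply le_csInf
      · obtain ⟨e, he⟩ := exists_enorm_one (n := Fin k)
        exact ⟨_, e, he, rfl⟩
      · rintro r ⟨x, hx, rfl⟩
        have := hmaster x
        rwa [hx, mul_one] at this
end
end

section
/- Let M_n = V diag(Λ_{n1},…,Λ_{nd}) V⁻¹, n = 1,…,N, be jointly diagonalizable real d×d matrices with γ = min_{i<i'} Σ_{n=1}^N (Λ_{ni} − Λ_{ni'})² > 0, and let U₀ be an exact joint triangularizer of {M_n}. Then for every skew-symmetric d×d matrix X: Σ_{n=1}^N ‖low([U₀ᵀ M_n U₀, X])‖² ≥ (γ / (2 κ(V)⁴)) · ‖X‖². -/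
open Matrix Kronecker BigOperators

noncomputable section

namespace HLB
variable {d : ℕ}

/-- Frobenius pairing. -/
def ip (A B : Mat d) : ℝ := ∑ i, ∑ j, A i j * B i j

lemma ip_self_nonneg (A : Mat d) : 0 ≤ ip A A := by
  apply Finset.sum_nonneg; intro i _; apply Finset.sum_nonneg; intro j _; exact mul_self_nonneg _

lemma frob_sq (A : Mat d) : frob A ^ 2 = ip A A := by
  have h : ∑ i, ∑ j, (A i j)^2 = ip A A := by
    simp [ip, pow_two]
  rw [frob, Real.sq_sqrt, h]
  rw [h]; exact ip_self_nonneg A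

lemma ip_eq_trace (A B : Mat d) : ip A B = (Aᵀ * B).trace := by
  simp only [Matrix.trace, Matrix.diag_apply, mul_apply, transpose_apply, ip]
  exact Finset.sum_comm

lemma ip_comm (A B : Mat d) : ip A B = ip B A := by
  simp [ip, mul_comm]

lemma ip_mul_left (A B C : Mat d) : ip (A * B) C = ip B (Aᵀ * C) := by
  rw [ip_eq_trace, ip_eq_trace, transpose_mul, mul_assoc]

lemma ip_mul_right (A B C : Mat d) : ip (B * A) C = ip B (C * Aᵀ) := by
  rw [ip_eq_trace, ip_eq_trace, transpose_mul]
  rw [mul_assoc, Matrix.trace_mul_comm, mul_assoc]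

lemma ip_sub_right (A B C : Mat d) : ip A (B - C) = ip A B - ip A C := by
  simp [ip, mul_sub, Finset.sum_sub_distrib]

lemma ip_sub_left (A B C : Mat d) : ip (A - B) C = ip A C - ip B C := by
  simp [ip, sub_mul, Finset.sum_sub_distrib]

lemma ip_cs (A B : Mat d) : (ip A B)^2 ≤ ip A A * ip B B := by
  have h1 : ip A B = ∑ p : Fin d × Fin d, A p.1 p.2 * B p.1 p.2 := by
    rw [ip, Fintype.sum_prod_type]
  have h2 : ip A A = ∑ p : Fin d × Fin d, (A p.1 p.2)^2 := by
    rw [ip, Fintype.sum_prod_type]; simp [pow_two]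
  have h3 : ip B B = ∑ p : Fin d × Fin d, (B p.1 p.2)^2 := by
    rw [ip, Fintype.sum_prod_type]; simp [pow_two]
  rw [h1, h2, h3]
  exact Finset.sum_mul_sq_le_sq_mul_sq _ _ _



lemma enorm_nonneg {m : Type*} [Fintype m] (v : m → ℝ) : 0 ≤ _root_.enorm v := Real.sqrt_nonneg _

lemma enorm_sq {m : Type*} [Fintype m] (v : m → ℝ) : _root_.enorm v ^ 2 = ∑ i, (v i)^2 := by
  rw [_root_.enorm, Real.sq_sqrt]
  exact Finset.sum_nonneg fun i _ => sq_nonneg _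

lemma enorm_eq_zero {m : Type*} [Fintype m] {v : m → ℝ} (h : _root_.enorm v = 0) : v = 0 := by
  have h2 : ∑ i, (v i)^2 = 0 := by
    have := enorm_sq v; rw [h] at this; linarith [this.symm]
  funext i
  have := (Finset.sum_eq_zero_iff_of_nonneg (fun i _ => sq_nonneg (v i))).mp h2 i (Finset.mem_univ i)
  exact pow_eq_zero_iff (n := 2) (by norm_num) |>.mp this

lemma enorm_smul {m : Type*} [Fintype m] (c : ℝ) (v : m → ℝ) :
    _root_.enorm (c • v) = |c| * _root_.enorm v := by
  simp only [_root_.enorm, Pi.smul_apply, smul_eq_mul, mul_pow]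
  rw [← Finset.mul_sum, Real.sqrt_mul (sq_nonneg c), Real.sqrt_sq_eq_abs]

/-- squared Cauchy-Schwarz for vectors -/
lemma vec_cs {m : Type*} [Fintype m] (v w : m → ℝ) :
    (∑ i, v i * w i)^2 ≤ (∑ i, (v i)^2) * (∑ i, (w i)^2) :=
  Finset.sum_mul_sq_le_sq_mul_sq _ _ _

lemma enorm_mulVec_le_frob {m n : Type*} [Fintype m] [Fintype n]
    (A : Matrix m n ℝ) (x : n → ℝ) :
    _root_.enorm (A.mulVec x) ≤ frob A * _root_.enorm x := by
  have h1 : ∀ i, (A.mulVec x i)^2 ≤ (∑ j, (A i j)^2) * (∑ j, (x j)^2) := by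
    intro i
    have := vec_cs (fun j => A i j) x
    simpa [Matrix.mulVec, dotProduct] using this
  have h2 : _root_.enorm (A.mulVec x) ^2 ≤ (frob A * _root_.enorm x)^2 := by
    have hf : frob A ^ 2 = ∑ i, ∑ j, (A i j)^2 := by
      rw [frob, Real.sq_sqrt]
      exact Finset.sum_nonneg fun i _ => Finset.sum_nonneg fun j _ => sq_nonneg _
    rw [enorm_sq, mul_pow, hf, enorm_sq, Finset.sum_mul]
    exact Finset.sum_le_sum fun i _ => h1 i
  have hfn : 0 ≤ frob A := Real.sqrt_nonneg _
  have := Real.sqrt_le_sqrt h2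
  rwa [Real.sqrt_sq (enorm_nonneg _), Real.sqrt_sq (mul_nonneg hfn (enorm_nonneg _))] at this

lemma sv_set_bddAbove {m n : Type*} [Fintype m] [Fintype n] (A : Matrix m n ℝ) :
    BddAbove {r | ∃ x : n → ℝ, _root_.enorm x = 1 ∧ r = _root_.enorm (A.mulVec x)} := by
  refine ⟨frob A, ?_⟩
  rintro r ⟨x, hx, rfl⟩
  calc _root_.enorm (A.mulVec x) ≤ frob A * _root_.enorm x := enorm_mulVec_le_frob A x
  _ = frob A := by rw [hx, mul_one]

lemma sv_set_nonempty {m n : Type*} [Fintype m] [Fintype n] [Nonempty n] (A : Matrix m n ℝ) :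
    Set.Nonempty {r | ∃ x : n → ℝ, _root_.enorm x = 1 ∧ r = _root_.enorm (A.mulVec x)} := by
  classical
  set e : n → ℝ := fun j => if j = Classical.arbitrary n then (1:ℝ) else 0 with he
  refine ⟨_root_.enorm (A.mulVec e), e, ?_, rfl⟩
  have : ∑ i, (e i)^2 = 1 := by
    rw [Finset.sum_eq_single (Classical.arbitrary n)]
    · simp [he]
    · intro b _ hb; simp [he, hb]
    · intro h; exact absurd (Finset.mem_univ _) h
  rw [_root_.enorm, this, Real.sqrt_one]

lemma sigMax_nonneg {m n : Type*} [Fintype m] [Fintype n] [Nonempty n] (A : Matrix m n ℝ) :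
    0 ≤ sigMax A := by
  obtain ⟨r, hr⟩ := sv_set_nonempty A
  have : 0 ≤ r := by obtain ⟨x, _, rfl⟩ := hr; exact enorm_nonneg _
  exact this.trans (le_csSup (sv_set_bddAbove A) hr)

lemma enorm_mulVec_le_sigMax {m n : Type*} [Fintype m] [Fintype n] [Nonempty n]
    (A : Matrix m n ℝ) (x : n → ℝ) :
    _root_.enorm (A.mulVec x) ≤ sigMax A * _root_.enorm x := by
  by_cases hx : _root_.enorm x = 0
  · have : x = 0 := enorm_eq_zero hx
    subst this
    rw [Matrix.mulVec_zero, hx, mul_zero]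
    simp [_root_.enorm]
  · have hc : 0 < _root_.enorm x := lt_of_le_of_ne (enorm_nonneg x) (Ne.symm hx)
    set c := _root_.enorm x with hcdef
    have hy : _root_.enorm (c⁻¹ • x) = 1 := by
      rw [enorm_smul, abs_of_pos (inv_pos.mpr hc)]
      field_simp
      exact hcdef.symm
    have hmem : _root_.enorm (A.mulVec (c⁻¹ • x)) ∈
        {r | ∃ y : n → ℝ, _root_.enorm y = 1 ∧ r = _root_.enorm (A.mulVec y)} := ⟨_, hy, rfl⟩
    have hle := le_csSup (sv_set_bddAbove A) hmem
    rw [Matrix.mulVec_smul, enorm_smul, abs_of_pos (inv_pos.mpr hc)] at hle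
    calc _root_.enorm (A.mulVec x) = c * (c⁻¹ * _root_.enorm (A.mulVec x)) := by field_simp
    _ ≤ c * sigMax A := by
        apply mul_le_mul_of_nonneg_left _ hc.le
        exact hle
    _ = sigMax A * c := mul_comm _ _

lemma sigMax_le {m n : Type*} [Fintype m] [Fintype n] [Nonempty n]
    (A : Matrix m n ℝ) (c : ℝ) (h : ∀ x : n → ℝ, _root_.enorm x = 1 → _root_.enorm (A.mulVec x) ≤ c) :
    sigMax A ≤ c := by
  apply csSup_le (sv_set_nonempty A)
  rintro r ⟨x, hx, rfl⟩; exact h x hx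

lemma sigMin_le {m n : Type*} [Fintype m] [Fintype n]
    (A : Matrix m n ℝ) (x : n → ℝ) (hx : _root_.enorm x = 1) :
    sigMin A ≤ _root_.enorm (A.mulVec x) := by
  apply csInf_le
  · refine ⟨0, ?_⟩; rintro r ⟨y, _, rfl⟩; exact enorm_nonneg _
  · exact ⟨x, hx, rfl⟩

lemma sigMax_transpose_le (A : Mat d) [Nonempty (Fin d)] : sigMax Aᵀ ≤ sigMax A := by
  apply sigMax_le
  intro y hy
  have h1 : _root_.enorm (Aᵀ.mulVec y) ^ 2 = ∑ i, y i * (A.mulVec (Aᵀ.mulVec y)) i := by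
    rw [enorm_sq]
    simp only [Matrix.mulVec, dotProduct, transpose_apply]
    calc ∑ j, (∑ i, A i j * y i)^2
        = ∑ j, ∑ i, (A i j * y i) * (∑ k, A k j * y k) := by
          apply Finset.sum_congr rfl; intro j _; rw [pow_two, Finset.sum_mul]
      _ = ∑ i, ∑ j, (A i j * y i) * (∑ k, A k j * y k) := Finset.sum_comm
      _ = ∑ i, y i * ∑ j, A i j * (∑ k, A k j * y k) := by
          apply Finset.sum_congr rfl; intro i _; rw [Finset.mul_sum]
          apply Finset.sum_congr rfl; intro j _; ring
  have h2 : (_root_.enorm (Aᵀ.mulVec y) ^ 2) ^ 2 ≤ (sigMax A * _root_.enorm (Aᵀ.mulVec y)) ^ 2 := by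
    rw [h1]
    calc (∑ i, y i * (A.mulVec (Aᵀ.mulVec y)) i)^2
        ≤ (∑ i, (y i)^2) * (∑ i, ((A.mulVec (Aᵀ.mulVec y)) i)^2) := vec_cs _ _
      _ = _root_.enorm y ^2 * _root_.enorm (A.mulVec (Aᵀ.mulVec y)) ^2 := by rw [enorm_sq, enorm_sq]
      _ = _root_.enorm (A.mulVec (Aᵀ.mulVec y)) ^2 := by rw [hy]; ring
      _ ≤ (sigMax A * _root_.enorm (Aᵀ.mulVec y))^2 := by
          apply pow_le_pow_left₀ (enorm_nonneg _)
          exact enorm_mulVec_le_sigMax A _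
  have h3 : _root_.enorm (Aᵀ.mulVec y) ^ 2 ≤ sigMax A * _root_.enorm (Aᵀ.mulVec y) := by
    have hb : 0 ≤ sigMax A * _root_.enorm (Aᵀ.mulVec y) :=
      mul_nonneg (sigMax_nonneg A) (enorm_nonneg _)
    nlinarith [sq_nonneg (_root_.enorm (Aᵀ.mulVec y) ^ 2 - sigMax A * _root_.enorm (Aᵀ.mulVec y))]
  by_cases hz : _root_.enorm (Aᵀ.mulVec y) = 0
  · rw [hz]; exact sigMax_nonneg A
  · have hpos : 0 < _root_.enorm (Aᵀ.mulVec y) := lt_of_le_of_ne (enorm_nonneg _) (Ne.symm hz)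
    rw [pow_two] at h3
    exact le_of_mul_le_mul_right (by linarith [h3]) hpos


lemma enorm_ortho_mulVec {W : Mat d} (hW : Wᵀ * W = 1) (x : Fin d → ℝ) :
    _root_.enorm (W.mulVec x) = _root_.enorm x := by
  rw [_root_.enorm, _root_.enorm]
  congr 1
  have : ∀ v : Fin d → ℝ, ∑ i, (v i)^2 = ∑ i, v i * v i := by
    intro v; apply Finset.sum_congr rfl; intro i _; ring
  rw [this, this]
  calc ∑ i, W.mulVec x i * W.mulVec x i
      = ∑ i, ∑ j, ∑ k, (W i j * x j) * (W i k * x k) := by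
        apply Finset.sum_congr rfl; intro i _
        simp only [Matrix.mulVec, dotProduct]
        rw [Finset.sum_mul_sum]
    _ = ∑ j, ∑ k, (∑ i, W i j * W i k) * (x j * x k) := by
        rw [Finset.sum_comm]
        apply Finset.sum_congr rfl; intro j _
        rw [Finset.sum_comm]
        apply Finset.sum_congr rfl; intro k _
        rw [Finset.sum_mul]
        apply Finset.sum_congr rfl; intro i _; ring
    _ = ∑ j, ∑ k, (if j = k then (1:ℝ) else 0) * (x j * x k) := by
        apply Finset.sum_congr rfl; intro j _
        apply Finset.sum_congr rfl; intro k _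
        congr 1
        have := congrFun (congrFun hW j) k
        simp only [Matrix.mul_apply, transpose_apply, Matrix.one_apply] at this
        exact this
    _ = ∑ j, x j * x j := by
        apply Finset.sum_congr rfl; intro j _
        rw [Finset.sum_eq_single j]
        · simp
        · intro k _ hk; simp [Ne.symm hk]
        · intro h; exact absurd (Finset.mem_univ _) h

lemma sigMax_orthoL [Nonempty (Fin d)] {W : Mat d} (hW : Wᵀ * W = 1) (B : Mat d) :
    sigMax (W * B) ≤ sigMax B := by
  apply sigMax_le
  intro x hx
  rw [← Matrix.mulVec_mulVec, enorm_ortho_mulVec hW]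
  calc _root_.enorm (B.mulVec x) ≤ sigMax B * _root_.enorm x := enorm_mulVec_le_sigMax B x
  _ = sigMax B := by rw [hx, mul_one]

lemma sigMax_orthoR [Nonempty (Fin d)] {W : Mat d} (hW : Wᵀ * W = 1) (B : Mat d) :
    sigMax (B * W) ≤ sigMax B := by
  apply sigMax_le
  intro x hx
  rw [← Matrix.mulVec_mulVec]
  calc _root_.enorm (B.mulVec (W.mulVec x)) ≤ sigMax B * _root_.enorm (W.mulVec x) :=
        enorm_mulVec_le_sigMax B _
  _ = sigMax B := by rw [enorm_ortho_mulVec hW, hx, mul_one]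

lemma sigMin_pos [Nonempty (Fin d)] {V : Mat d} (hV1 : V⁻¹ * V = 1) : 0 < sigMin V := by
  have hkey : ∀ x : Fin d → ℝ, _root_.enorm x = 1 → (frob V⁻¹)⁻¹ ≤ _root_.enorm (V.mulVec x) := by
    intro x hx
    have h1 : _root_.enorm x ≤ frob V⁻¹ * _root_.enorm (V.mulVec x) := by
      have h2 : (V⁻¹).mulVec (V.mulVec x) = x := by
        rw [Matrix.mulVec_mulVec, hV1, Matrix.one_mulVec]
      calc _root_.enorm x = _root_.enorm ((V⁻¹).mulVec (V.mulVec x)) := by rw [h2]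
      _ ≤ frob V⁻¹ * _root_.enorm (V.mulVec x) := enorm_mulVec_le_frob _ _
    rw [hx] at h1
    have hfpos : 0 < frob V⁻¹ := by
      by_contra h
      push_neg at h
      have : frob V⁻¹ = 0 := le_antisymm h (Real.sqrt_nonneg _)
      rw [this, zero_mul] at h1; linarith
    rw [inv_le_iff_one_le_mul₀ hfpos]
    calc (1:ℝ) ≤ frob V⁻¹ * _root_.enorm (V.mulVec x) := h1
    _ = _root_.enorm (V.mulVec x) * frob V⁻¹ := mul_comm _ _
  have h2 : (frob V⁻¹)⁻¹ ≤ sigMin V := by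
    apply le_csInf (sv_set_nonempty V)
    rintro r ⟨x, hx, rfl⟩; exact hkey x hx
  have h3 : 0 < (frob V⁻¹)⁻¹ := by
    obtain ⟨x, hx⟩ : ∃ x : Fin d → ℝ, _root_.enorm x = 1 := by
      obtain ⟨r, x, hx, _⟩ := sv_set_nonempty V
      exact ⟨x, hx⟩
    have := hkey x hx
    by_contra h
    push_neg at h
    -- (frob V⁻¹)⁻¹ ≤ 0; but also (frob V⁻¹) ≥ 0 so inv ≥ 0, so inv = 0, frob V⁻¹ could be 0...
    have hinv0 : (frob V⁻¹)⁻¹ = 0 := le_antisymm h (inv_nonneg.mpr (Real.sqrt_nonneg _))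
    have hf0 : frob V⁻¹ = 0 := by
      by_contra hne
      exact hne (by rw [← inv_inv (frob V⁻¹), hinv0, _root_.inv_zero])
    -- then _root_.enorm x ≤ 0 contradiction
    have h2' : (V⁻¹).mulVec (V.mulVec x) = x := by
      rw [Matrix.mulVec_mulVec, hV1, Matrix.one_mulVec]
    have := enorm_mulVec_le_frob V⁻¹ (V.mulVec x)
    rw [h2', hx, hf0, zero_mul] at this
    linarith
  linarith

lemma sigMax_inv_le [Nonempty (Fin d)] {V : Mat d} (hV1 : V⁻¹ * V = 1) (hV2 : V * V⁻¹ = 1) :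
    sigMax V⁻¹ ≤ (sigMin V)⁻¹ := by
  have hmin := sigMin_pos hV1
  apply sigMax_le
  intro y hy
  set x := (V⁻¹).mulVec y with hxd
  have hyx : V.mulVec x = y := by
    rw [hxd, Matrix.mulVec_mulVec, hV2, Matrix.one_mulVec]
  by_cases hc : _root_.enorm x = 0
  · have : x = 0 := enorm_eq_zero hc
    rw [this, Matrix.mulVec_zero] at hyx
    rw [← hyx] at hy
    simp [_root_.enorm] at hy
  · have hcpos : 0 < _root_.enorm x := lt_of_le_of_ne (enorm_nonneg _) (Ne.symm hc)
    have h1 : sigMin V ≤ (_root_.enorm x)⁻¹ := by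
      have hu : _root_.enorm ((_root_.enorm x)⁻¹ • x) = 1 := by
        rw [enorm_smul, abs_of_pos (inv_pos.mpr hcpos)]
        field_simp
      have := sigMin_le V _ hu
      rwa [Matrix.mulVec_smul, enorm_smul, abs_of_pos (inv_pos.mpr hcpos), hyx, hy, mul_one] at this
    calc _root_.enorm ((V⁻¹).mulVec y) = _root_.enorm x := rfl
    _ = ((_root_.enorm x)⁻¹)⁻¹ := by rw [inv_inv]
    _ ≤ (sigMin V)⁻¹ := by
        apply one_div_le_one_div_of_le hmin at h1
        simpa [one_div] using h1

lemma ip_mul_matL [Nonempty (Fin d)] (A W : Mat d) :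
    ip (A * W) (A * W) ≤ sigMax A ^ 2 * ip W W := by
  have hcol : ∀ j, ∑ i, ((A * W) i j)^2 ≤ sigMax A ^2 * ∑ k, (W k j)^2 := by
    intro j
    have h1 : (fun i => (A * W) i j) = A.mulVec (fun k => W k j) := by
      funext i; simp [Matrix.mul_apply, Matrix.mulVec, dotProduct]
    have h2 : _root_.enorm (A.mulVec (fun k => W k j)) ≤ sigMax A * _root_.enorm (fun k => W k j) :=
      enorm_mulVec_le_sigMax _ _
    have h3 := pow_le_pow_left₀ (enorm_nonneg _) h2 2
    rw [enorm_sq, mul_pow, enorm_sq] at h3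
    calc ∑ i, ((A * W) i j)^2 = ∑ i, ((A.mulVec (fun k => W k j)) i)^2 := by rw [← h1]
    _ ≤ sigMax A ^2 * ∑ k, (W k j)^2 := h3
  have hip : ∀ (B : Mat d), ip B B = ∑ j, ∑ i, (B i j)^2 := by
    intro B
    rw [ip, Finset.sum_comm]
    apply Finset.sum_congr rfl; intro j _
    apply Finset.sum_congr rfl; intro i _; ring
  rw [hip, hip, Finset.mul_sum]
  exact Finset.sum_le_sum fun j _ => hcol j

lemma ip_mul_matR [Nonempty (Fin d)] (B W : Mat d) :
    ip (W * B) (W * B) ≤ sigMax Bᵀ ^ 2 * ip W W := by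
  have hrow : ∀ i, ∑ j, ((W * B) i j)^2 ≤ sigMax Bᵀ ^2 * ∑ k, (W i k)^2 := by
    intro i
    have h1 : (fun j => (W * B) i j) = Bᵀ.mulVec (fun k => W i k) := by
      funext j
      simp only [Matrix.mul_apply, Matrix.mulVec, dotProduct, transpose_apply]
      apply Finset.sum_congr rfl; intro k _; ring
    have h2 : _root_.enorm (Bᵀ.mulVec (fun k => W i k)) ≤ sigMax Bᵀ * _root_.enorm (fun k => W i k) :=
      enorm_mulVec_le_sigMax _ _
    have h3 := pow_le_pow_left₀ (enorm_nonneg _) h2 2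
    rw [enorm_sq, mul_pow, enorm_sq] at h3
    calc ∑ j, ((W * B) i j)^2 = ∑ j, ((Bᵀ.mulVec (fun k => W i k)) j)^2 := by rw [← h1]
    _ ≤ sigMax Bᵀ ^2 * ∑ k, (W i k)^2 := h3
  have hip : ∀ (C : Mat d), ip C C = ∑ i, ∑ j, (C i j)^2 := by
    intro C
    apply Finset.sum_congr rfl; intro i _
    apply Finset.sum_congr rfl; intro j _; ring
  rw [hip, hip, Finset.mul_sum]
  exact Finset.sum_le_sum fun i _ => hrow i

lemma ip_conj_le [Nonempty (Fin d)] (A B W : Mat d) :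
    ip (A * W * B) (A * W * B) ≤ (sigMax A * sigMax Bᵀ) ^ 2 * ip W W := by
  calc ip (A * W * B) (A * W * B) = ip (A * (W * B)) (A * (W * B)) := by rw [mul_assoc]
  _ ≤ sigMax A ^2 * ip (W * B) (W * B) := ip_mul_matL _ _
  _ ≤ sigMax A ^2 * (sigMax Bᵀ ^2 * ip W W) := by
      apply mul_le_mul_of_nonneg_left (ip_mul_matR _ _) (sq_nonneg _)
  _ = (sigMax A * sigMax Bᵀ)^2 * ip W W := by ring


/-- strictly lower support -/
def SLow (Y : Mat d) : Prop := ∀ i j : Fin d, (i : ℕ) ≤ (j : ℕ) → Y i j = 0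

/-- upper triangular -/
def UpT (T : Mat d) : Prop := ∀ i j : Fin d, (j : ℕ) < (i : ℕ) → T i j = 0

lemma slow_lowPart (A : Mat d) : SLow (lowPart A) := by
  intro i j h
  simp only [lowPart, Matrix.of_apply]
  rw [if_neg (by omega)]

lemma slow_sub {A B : Mat d} (hA : SLow A) (hB : SLow B) : SLow (A - B) := by
  intro i j h; simp [Matrix.sub_apply, hA i j h, hB i j h]

lemma slow_comm {Y T : Mat d} (hY : SLow Y) (hT : UpT T) :
    SLow (Tᵀ * Y - Y * Tᵀ) := by
  intro i j hij
  have h1 : (Tᵀ * Y) i j = 0 := by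
    rw [Matrix.mul_apply]
    apply Finset.sum_eq_zero; intro k _
    by_cases hk : (j : ℕ) < (k : ℕ)
    · by_cases hk2 : (i : ℕ) < (k : ℕ)
      · rw [Matrix.transpose_apply, hT k i hk2, zero_mul]
      · exact absurd (lt_of_le_of_lt hij hk) hk2
    · push_neg at hk
      rw [hY k j hk, mul_zero]
  have h2 : (Y * Tᵀ) i j = 0 := by
    rw [Matrix.mul_apply]
    apply Finset.sum_eq_zero; intro k _
    by_cases hk : (k : ℕ) < (i : ℕ)
    · have : (k:ℕ) < (j:ℕ) := lt_of_lt_of_le hk hij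
      rw [Matrix.transpose_apply, hT j k this, mul_zero]
    · push_neg at hk
      rw [hY i k hk, zero_mul]
  simp [Matrix.sub_apply, h1, h2]

lemma lowPart_upper_comm {Y T : Mat d} (hY : SLow Y) (hT : UpT T) :
    lowPart (T * Yᵀ - Yᵀ * T) = 0 := by
  ext i j
  simp only [lowPart, Matrix.of_apply, Matrix.zero_apply]
  split
  · next hij =>
    have h1 : (T * Yᵀ) i j = 0 := by
      rw [Matrix.mul_apply]
      apply Finset.sum_eq_zero; intro k _
      by_cases hk : (k : ℕ) < (i : ℕ)
      · rw [hT i k hk, zero_mul]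
      · push_neg at hk
        have : (j : ℕ) ≤ (k : ℕ) := le_trans (le_of_lt hij) hk
        rw [Matrix.transpose_apply, hY j k this, mul_zero]
    have h2 : (Yᵀ * T) i j = 0 := by
      rw [Matrix.mul_apply]
      apply Finset.sum_eq_zero; intro k _
      by_cases hk : (j : ℕ) < (k : ℕ)
      · rw [hT k j hk, mul_zero]
      · push_neg at hk
        have hki : (k : ℕ) ≤ (i:ℕ) := le_trans hk (le_of_lt hij)
        rw [Matrix.transpose_apply, hY k i hki, zero_mul]
    simp [Matrix.sub_apply, h1, h2]
  · rfl

lemma ip_lowPart {W : Mat d} (A : Mat d) (hW : SLow W) : ip (lowPart A) W = ip A W := by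
  apply Finset.sum_congr rfl; intro i _
  apply Finset.sum_congr rfl; intro j _
  simp only [lowPart, Matrix.of_apply]
  split
  · rfl
  · next h =>
    push_neg at h
    rw [hW i j (by omega), mul_zero, mul_zero]


section Diag

variable {N : ℕ} (Q P : Mat d) (T : Fin N → Mat d) (Λ : Fin N → Fin d → ℝ)

/-- The key structural lemma: conjugating a strictly lower matrix by the
eigenvector change of basis kills the diagonal. -/
lemma diag_conj_zero
    (hPQ : P * Q = 1)
    (hTQ : ∀ n, T n * Q = Q * Matrix.diagonal (Λ n))
    (hPT : ∀ n, P * T n = Matrix.diagonal (Λ n) * P)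
    (hUT : ∀ n, UpT (T n))
    (hdist : ∀ i j : Fin d, (∀ n, Λ n i = Λ n j) → i = j)
    (Y : Mat d) (hY : SLow Y) (i : Fin d) :
    (Qᵀ * Y * Pᵀ) i i = 0 := by
  classical
  -- support sets
  have hcolne : ∀ m : Fin d, (Finset.univ.filter (fun a => Q a m ≠ 0)).Nonempty := by
    intro m
    by_contra h
    rw [Finset.not_nonempty_iff_eq_empty, Finset.filter_eq_empty_iff] at h
    have h1 := congrFun (congrFun hPQ m) m
    simp only [Matrix.mul_apply, Matrix.one_apply_eq] at h1
    have : ∑ b, P m b * Q b m = 0 := by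
      apply Finset.sum_eq_zero; intro b _
      have := h (Finset.mem_univ b)
      push_neg at this
      rw [this, mul_zero]
    rw [this] at h1
    exact one_ne_zero h1.symm
  have hrowne : ∀ m : Fin d, (Finset.univ.filter (fun b => P m b ≠ 0)).Nonempty := by
    intro m
    by_contra h
    rw [Finset.not_nonempty_iff_eq_empty, Finset.filter_eq_empty_iff] at h
    have h1 := congrFun (congrFun hPQ m) m
    simp only [Matrix.mul_apply, Matrix.one_apply_eq] at h1
    have : ∑ b, P m b * Q b m = 0 := by
      apply Finset.sum_eq_zero; intro b _
      have := h (Finset.mem_univ b)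
      push_neg at this
      rw [this, zero_mul]
    rw [this] at h1
    exact one_ne_zero h1.symm
  set rI : Fin d → Fin d := fun m => (Finset.univ.filter (fun a => Q a m ≠ 0)).max' (hcolne m) with hrI
  set sI : Fin d → Fin d := fun m => (Finset.univ.filter (fun b => P m b ≠ 0)).min' (hrowne m) with hsI
  have hrQne : ∀ m, Q (rI m) m ≠ 0 := by
    intro m
    have := (Finset.univ.filter (fun a => Q a m ≠ 0)).max'_mem (hcolne m)
    rw [Finset.mem_filter] at this
    exact this.2
  have hsPne : ∀ m, P m (sI m) ≠ 0 := by
    intro m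
    have := (Finset.univ.filter (fun b => P m b ≠ 0)).min'_mem (hrowne m)
    rw [Finset.mem_filter] at this
    exact this.2
  have hcol0 : ∀ m a, rI m < a → Q a m = 0 := by
    intro m a ha
    by_contra h
    have : a ∈ Finset.univ.filter (fun a => Q a m ≠ 0) := by
      rw [Finset.mem_filter]; exact ⟨Finset.mem_univ _, h⟩
    exact absurd (Finset.le_max' _ a this) (not_le.mpr ha)
  have hrow0 : ∀ m b, b < sI m → P m b = 0 := by
    intro m b hb
    by_contra h
    have : b ∈ Finset.univ.filter (fun b => P m b ≠ 0) := by
      rw [Finset.mem_filter]; exact ⟨Finset.mem_univ _, h⟩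
    exact absurd (Finset.min'_le _ b this) (not_le.mpr hb)
  have h1 : ∀ n m, T n (rI m) (rI m) = Λ n m := by
    intro n m
    have heq := congrFun (congrFun (hTQ n) (rI m)) m
    rw [Matrix.mul_apply, Matrix.mul_diagonal] at heq
    rw [Finset.sum_eq_single (rI m)] at heq
    · exact mul_right_cancel₀ (hrQne m) (by rw [heq, mul_comm])
    · intro k _ hk
      rcases lt_or_gt_of_ne hk with hlt | hgt
      · rw [hUT n (rI m) k (by exact hlt), zero_mul]
      · rw [hcol0 m k hgt, mul_zero]
    · intro h; exact absurd (Finset.mem_univ _) h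
  have h2 : ∀ n m, T n (sI m) (sI m) = Λ n m := by
    intro n m
    have heq := congrFun (congrFun (hPT n) m) (sI m)
    rw [Matrix.mul_apply, Matrix.diagonal_mul] at heq
    rw [Finset.sum_eq_single (sI m)] at heq
    · exact mul_left_cancel₀ (hsPne m) (by rw [heq]; ring)
    · intro k _ hk
      rcases lt_or_gt_of_ne hk with hlt | hgt
      · rw [hrow0 m k hlt, zero_mul]
      · rw [hUT n k (sI m) (by exact hgt), mul_zero]
    · intro h; exact absurd (Finset.mem_univ _) h
  have hrinj : Function.Injective rI := by
    intro a b hab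
    apply hdist
    intro n
    rw [← h1 n a, ← h1 n b, hab]
  have hrsurj : Function.Surjective rI := Finite.surjective_of_injective hrinj
  have hrs : ∀ m, sI m = rI m := by
    intro m
    obtain ⟨j, hj⟩ := hrsurj (sI m)
    have hjm : j = m := by
      apply hdist
      intro n
      rw [← h1 n j, hj, h2 n m]
    subst hjm
    exact hj.symm
  -- final computation
  rw [Matrix.mul_apply]
  apply Finset.sum_eq_zero
  intro b _
  rw [Matrix.transpose_apply]
  by_cases hPb : P i b = 0
  · rw [hPb, mul_zero]
  · have hbs : sI i ≤ b := by
      by_contra h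
      exact hPb (hrow0 i b (not_le.mp h))
    have hinner : (Qᵀ * Y) i b = 0 := by
      rw [Matrix.mul_apply]
      apply Finset.sum_eq_zero
      intro a _
      rw [Matrix.transpose_apply]
      by_cases hQa : Q a i = 0
      · rw [hQa, zero_mul]
      · have har : a ≤ rI i := by
          by_contra h
          exact hQa (hcol0 i a (not_le.mp h))
        have : (a : ℕ) ≤ (b : ℕ) := by
          have h3 : (a:ℕ) ≤ ((rI i : Fin d) : ℕ) := har
          have h4 : ((sI i : Fin d) : ℕ) ≤ (b:ℕ) := hbs
          rw [hrs i] at h4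
          omega
        rw [hY a b this, mul_zero]
    rw [hinner, zero_mul]

end Diag

lemma slow_add {A B : Mat d} (hA : SLow A) (hB : SLow B) : SLow (A + B) := by
  intro i j h; simp [Matrix.add_apply, hA i j h, hB i j h]

lemma slow_smul (c : ℝ) {A : Mat d} (hA : SLow A) : SLow (c • A) := by
  intro i j h; simp [Matrix.smul_apply, hA i j h]

lemma slow_zero : SLow (0 : Mat d) := fun i j _ => rfl

/-- The conjugated strictly-lower subspace, inside Euclidean space. -/
def Ksub (Q P : Mat d) : Submodule ℝ (EuclideanSpace ℝ (Fin d × Fin d)) where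
  carrier := {x | ∃ W : Mat d, SLow W ∧ ∀ p : Fin d × Fin d, x p = (Qᵀ * W * Pᵀ) p.1 p.2}
  add_mem' := by
    rintro x y ⟨W1, h1, e1⟩ ⟨W2, h2, e2⟩
    refine ⟨W1 + W2, slow_add h1 h2, fun p => ?_⟩
    have : (x + y) p = x p + y p := rfl
    rw [this, e1 p, e2 p]
    simp [Matrix.mul_add, Matrix.add_mul]
  zero_mem' := by
    refine ⟨0, slow_zero, fun p => ?_⟩
    simp
  smul_mem' := by
    rintro c x ⟨W, hW, e⟩
    refine ⟨c • W, slow_smul c hW, fun p => ?_⟩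
    have : (c • x) p = c * x p := rfl
    rw [this, e p]
    simp [Matrix.mul_smul, Matrix.smul_mul]

lemma proj_exists (Q P : Mat d) (v : Mat d) :
    ∃ u : Mat d, (∃ W : Mat d, SLow W ∧ u = Qᵀ * W * Pᵀ) ∧
      ∀ (Z W' : Mat d), SLow W' → Z = Qᵀ * W' * Pᵀ → ip u Z = ip v Z := by
  classical
  set K := Ksub Q P with hK
  set ve : EuclideanSpace ℝ (Fin d × Fin d) := WithLp.toLp 2 (fun p : Fin d × Fin d => v p.1 p.2) with hve
  set ue : EuclideanSpace ℝ (Fin d × Fin d) := (K.orthogonalProjection ve : EuclideanSpace ℝ (Fin d × Fin d)) with hue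
  refine ⟨Matrix.of (fun i j => ue (i, j)), ?_, ?_⟩
  · obtain ⟨W, hW, heq⟩ := (K.orthogonalProjection ve).2
    refine ⟨W, hW, ?_⟩
    ext i j
    exact heq (i, j)
  · intro Z W' hW' hZ
    have hZK : (WithLp.toLp 2 (fun p : Fin d × Fin d => Z p.1 p.2) : EuclideanSpace ℝ (Fin d × Fin d)) ∈ K := by
      exact ⟨W', hW', fun p => by rw [hZ]⟩
    have h0 : inner ℝ (ve - ue) (WithLp.toLp 2 (fun p : Fin d × Fin d => Z p.1 p.2) : EuclideanSpace ℝ (Fin d × Fin d)) = 0 :=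
        Submodule.starProjection_inner_eq_zero (K := K) ve _ hZK
    have h1 : ∑ p : Fin d × Fin d, (ve p - ue p) * Z p.1 p.2 = 0 := by
      have : (inner ℝ (ve - ue) (WithLp.toLp 2 (fun p : Fin d × Fin d => Z p.1 p.2) : EuclideanSpace ℝ (Fin d × Fin d)) : ℝ) =
          ∑ p : Fin d × Fin d, (ve - ue) p * Z p.1 p.2 := by
        simp [PiLp.inner_apply, mul_comm]
      rw [this] at h0
      have h2 : ∀ p : Fin d × Fin d, (ve - ue) p = ve p - ue p := fun p => rfl
      calc ∑ p : Fin d × Fin d, (ve p - ue p) * Z p.1 p.2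
          = ∑ p : Fin d × Fin d, (ve - ue) p * Z p.1 p.2 := by
            apply Finset.sum_congr rfl; intro p _; rw [h2]
        _ = 0 := h0
    have h3 : ∑ p : Fin d × Fin d, ue p * Z p.1 p.2 = ∑ p : Fin d × Fin d, ve p * Z p.1 p.2 := by
      have := Finset.sum_sub_distrib (f := fun p : Fin d × Fin d => ve p * Z p.1 p.2)
        (g := fun p : Fin d × Fin d => ue p * Z p.1 p.2) (s := Finset.univ)
      have h4 : ∑ p : Fin d × Fin d, (ve p * Z p.1 p.2 - ue p * Z p.1 p.2) = 0 := by
        rw [← h1]; apply Finset.sum_congr rfl; intro p _; ring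
      rw [this] at h4
      linarith
    rw [ip, ip]
    calc ∑ i, ∑ j, (Matrix.of (fun i j => ue (i,j))) i j * Z i j
        = ∑ p : Fin d × Fin d, ue p * Z p.1 p.2 := by
          rw [Fintype.sum_prod_type]; rfl
      _ = ∑ p : Fin d × Fin d, ve p * Z p.1 p.2 := h3
      _ = ∑ i, ∑ j, v i j * Z i j := by
          rw [Fintype.sum_prod_type]

end HLB


set_option maxHeartbeats 1000000 in
/-- lower bound `Σₙ ‖low([U₀ᵀ Mₙ U₀, X])‖² ≥ (γ/(2κ(V)⁴))‖X‖²`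
for skew-symmetric `X`. -/
theorem hessian_lower_bound {d N : ℕ} (V : Mat d) (hV : IsUnit V)
    (Λ : Fin N → Fin d → ℝ) (M : Fin N → Mat d)
    (hM : ∀ n, M n = V * Matrix.diagonal (Λ n) * V⁻¹)
    (hγ : 0 < gapMin Λ)
    (U₀ : Mat d) (hU₀ : ExactTriang U₀ M) :
    ∀ X : Mat d, IsSkew X →
      gapMin Λ / (2 * condNum V ^ 4) * frob X ^ 2 ≤
        ∑ n, frob (lowPart (mcomm (U₀ᵀ * M n * U₀) X)) ^ 2 := by
  classical
  intro X hX
  open HLB in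
  -- dimension is positive
  have hd : 0 < d := by
    by_contra h
    push_neg at h
    have hd0 : d = 0 := Nat.le_zero.mp h
    subst hd0
    have hempty : {r | ∃ i i' : Fin 0, i < i' ∧ r = ∑ n, (Λ n i - Λ n i') ^ 2} = ∅ := by
      rw [Set.eq_empty_iff_forall_notMem]
      rintro r ⟨i, _, _, _⟩
      exact i.elim0
    rw [gapMin, hempty, Real.sInf_empty] at hγ
    exact lt_irrefl 0 hγ
  haveI : Nonempty (Fin d) := ⟨⟨0, hd⟩⟩
  -- basic matrix identities
  have hdet : IsUnit V.det := (Matrix.isUnit_iff_isUnit_det V).mp hV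
  have hVinv : V * V⁻¹ = 1 := Matrix.mul_nonsing_inv V hdet
  have hinvV : V⁻¹ * V = 1 := Matrix.nonsing_inv_mul V hdet
  obtain ⟨hOrt, hlowzero⟩ := hU₀
  have hOrt' : U₀ᵀ * U₀ = 1 := hOrt
  have hUUt : U₀ * U₀ᵀ = 1 := mul_eq_one_comm.mp hOrt'
  set Q : Mat d := U₀ᵀ * V with hQdef
  set Pm : Mat d := V⁻¹ * U₀ with hPdef
  have cancelU : ∀ A : Mat d, U₀ * (U₀ᵀ * A) = A := fun A => by
    rw [← mul_assoc, hUUt, one_mul]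
  have cancelUt : ∀ A : Mat d, U₀ᵀ * (U₀ * A) = A := fun A => by
    rw [← mul_assoc, hOrt', one_mul]
  have cancelV : ∀ A : Mat d, V * (V⁻¹ * A) = A := fun A => by
    rw [← mul_assoc, hVinv, one_mul]
  have cancelVi : ∀ A : Mat d, V⁻¹ * (V * A) = A := fun A => by
    rw [← mul_assoc, hinvV, one_mul]
  have hQP : Q * Pm = 1 := by
    rw [hQdef, hPdef, mul_assoc, cancelV]
    exact hOrt'
  have hPQ : Pm * Q = 1 := by
    rw [hQdef, hPdef, mul_assoc, cancelU]
    exact hinvV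
  have hPtQt : Pmᵀ * Qᵀ = (1 : Mat d) := by
    rw [← Matrix.transpose_mul, hQP, Matrix.transpose_one]
  have hQtPt : Qᵀ * Pmᵀ = (1 : Mat d) := by
    rw [← Matrix.transpose_mul, hPQ, Matrix.transpose_one]
  set T : Fin N → Mat d := fun n => U₀ᵀ * M n * U₀ with hTdef
  have hTQ : ∀ n, T n * Q = Q * Matrix.diagonal (Λ n) := by
    intro n
    rw [hTdef]
    simp only [hM n, hQdef]
    rw [mul_assoc (U₀ᵀ * (V * Matrix.diagonal (Λ n) * V⁻¹)) U₀ (U₀ᵀ * V)]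
    rw [cancelU]
    rw [mul_assoc U₀ᵀ (V * Matrix.diagonal (Λ n) * V⁻¹) V]
    rw [mul_assoc (V * Matrix.diagonal (Λ n)) V⁻¹ V, hinvV, mul_one, ← mul_assoc]
  have hPT : ∀ n, Pm * T n = Matrix.diagonal (Λ n) * Pm := by
    intro n
    rw [hTdef]
    simp only [hM n, hPdef]
    calc V⁻¹ * U₀ * (U₀ᵀ * (V * Matrix.diagonal (Λ n) * V⁻¹) * U₀)
        = V⁻¹ * (U₀ * (U₀ᵀ * (V * Matrix.diagonal (Λ n) * V⁻¹ * U₀))) := by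
          rw [mul_assoc, mul_assoc (U₀ᵀ) _ U₀]
      _ = V⁻¹ * (V * Matrix.diagonal (Λ n) * V⁻¹ * U₀) := by rw [cancelU]
      _ = V⁻¹ * (V * (Matrix.diagonal (Λ n) * (V⁻¹ * U₀))) := by
          rw [mul_assoc (V * Matrix.diagonal (Λ n)) V⁻¹ U₀, mul_assoc V _ _]
      _ = Matrix.diagonal (Λ n) * (V⁻¹ * U₀) := by rw [cancelVi]
  have hUT : ∀ n, HLB.UpT (T n) := by
    intro n i j hji
    have h0 := congrFun (congrFun (hlowzero n) i) j
    simp only [lowPart, Matrix.of_apply, Matrix.zero_apply] at h0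
    rw [if_pos hji] at h0
    exact h0
  -- gap facts
  have hbdd : BddBelow {r | ∃ i i' : Fin d, i < i' ∧ r = ∑ n, (Λ n i - Λ n i') ^ 2} := by
    refine ⟨0, ?_⟩
    rintro r ⟨i, i', _, rfl⟩
    exact Finset.sum_nonneg fun n _ => sq_nonneg _
  have gap_le : ∀ i j : Fin d, i ≠ j → gapMin Λ ≤ ∑ n, (Λ n i - Λ n j) ^ 2 := by
    intro i j hne
    rcases lt_or_gt_of_ne hne with hlt | hgt
    · exact csInf_le hbdd ⟨i, j, hlt, rfl⟩
    · have : ∑ n, (Λ n i - Λ n j)^2 = ∑ n, (Λ n j - Λ n i)^2 := by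
        apply Finset.sum_congr rfl; intro n _; ring
      rw [this]
      exact csInf_le hbdd ⟨j, i, hgt, rfl⟩
  have hdist : ∀ i j : Fin d, (∀ n, Λ n i = Λ n j) → i = j := by
    intro i j hall
    by_contra hne
    have h1 := gap_le i j hne
    have h2 : ∑ n, (Λ n i - Λ n j)^2 = 0 := by
      apply Finset.sum_eq_zero; intro n _; rw [hall n]; ring
    rw [h2] at h1
    linarith
  -- skew decomposition
  set Y : Mat d := lowPart X with hYdef
  have hY : HLB.SLow Y := HLB.slow_lowPart X
  have hXY : X = Y - Yᵀ := by
    ext i j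
    have hsk := congrFun (congrFun hX i) j
    simp only [Matrix.transpose_apply, Matrix.neg_apply] at hsk
    simp only [Matrix.sub_apply, Matrix.transpose_apply, hYdef, lowPart, Matrix.of_apply]
    rcases lt_trichotomy (j : ℕ) (i : ℕ) with hlt | heq | hgt
    · rw [if_pos hlt, if_neg (by omega)]
      ring
    · have hij : i = j := Fin.ext (by omega)
      subst hij
      simp only [lt_irrefl, if_false]
      have : X i i = - X i i := hsk
      linarith
    · rw [if_neg (by omega), if_pos hgt]
      -- 0 - X j i = X i j since X j i = -X i j ... hsk : X j i = -X i j
      rw [hsk]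
      ring
  have hnsqX : HLB.ip X X = 2 * HLB.ip Y Y := by
    rw [hXY, HLB.ip_sub_left, HLB.ip_sub_right, HLB.ip_sub_right]
    have h1 : HLB.ip Y Yᵀ = 0 := by
      apply Finset.sum_eq_zero; intro i _
      apply Finset.sum_eq_zero; intro j _
      rw [Matrix.transpose_apply]
      by_cases hij : (i : ℕ) ≤ (j : ℕ)
      · rw [hY i j hij, zero_mul]
      · rw [hY j i (by omega), mul_zero]
    have h2 : HLB.ip Yᵀ Y = 0 := by rw [HLB.ip_comm]; exact h1
    have h3 : HLB.ip Yᵀ Yᵀ = HLB.ip Y Y := by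
      rw [HLB.ip, HLB.ip, Finset.sum_comm]
      apply Finset.sum_congr rfl; intro i _
      apply Finset.sum_congr rfl; intro j _
      rw [Matrix.transpose_apply]
    rw [h1, h2, h3]
    ring
  -- commutator reduction
  have lowPart_sub : ∀ A B : Mat d, lowPart (A - B) = lowPart A - lowPart B := by
    intro A B
    ext i j
    simp only [lowPart, Matrix.of_apply, Matrix.sub_apply]
    split <;> simp
  have hCred : ∀ n, lowPart (mcomm (T n) X) = lowPart (T n * Y - Y * T n) := by
    intro n
    have : mcomm (T n) X = (T n * Y - Y * T n) - (T n * Yᵀ - Yᵀ * T n) := by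
      rw [mcomm, hXY]
      rw [Matrix.mul_sub, Matrix.sub_mul]
      abel
    rw [this, lowPart_sub, HLB.lowPart_upper_comm hY (hUT n), sub_zero]
  set C : Fin N → Mat d := fun n => lowPart (T n * Y - Y * T n) with hCdef
  -- the projection u
  obtain ⟨u, ⟨Wu, hWu, huWu⟩, hproj⟩ := HLB.proj_exists Q Pm (Pm * Y * Q)
  -- conjugation-invariance of the pairing
  have ip_conj_inv : ∀ A B : Mat d, HLB.ip (Pm * A * Q) (Qᵀ * B * Pmᵀ) = HLB.ip A B := by
    intro A B
    rw [HLB.ip_mul_right, HLB.ip_mul_left]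
    congr 1
    calc Pmᵀ * (Qᵀ * B * Pmᵀ * Qᵀ) = Pmᵀ * (Qᵀ * B * (Pmᵀ * Qᵀ)) := by
          rw [mul_assoc (Qᵀ * B) Pmᵀ Qᵀ]
      _ = Pmᵀ * (Qᵀ * B) := by rw [hPtQt, mul_one]
      _ = (Pmᵀ * Qᵀ) * B := by rw [mul_assoc]
      _ = B := by rw [hPtQt, one_mul]
  -- the Hadamard gap action
  set Hd : Fin N → Mat d → Mat d :=
    fun n Z => Matrix.of fun i j => (Λ n i - Λ n j) * Z i j with hHdef
  have hHd_eq : ∀ n Z, Hd n Z = Matrix.diagonal (Λ n) * Z - Z * Matrix.diagonal (Λ n) := by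
    intro n Z
    ext i j
    simp only [hHdef, Matrix.of_apply, Matrix.sub_apply, Matrix.diagonal_mul,
      Matrix.mul_diagonal]
    ring
  have hclosure : ∀ n (W : Mat d),
      Hd n (Qᵀ * W * Pmᵀ) = Qᵀ * ((T n)ᵀ * W - W * (T n)ᵀ) * Pmᵀ := by
    intro n W
    have hDQ : Matrix.diagonal (Λ n) * Qᵀ = Qᵀ * (T n)ᵀ := by
      have := congrArg Matrix.transpose (hTQ n)
      simp only [Matrix.transpose_mul, Matrix.diagonal_transpose] at this
      exact this.symm
    have hPD : Pmᵀ * Matrix.diagonal (Λ n) = (T n)ᵀ * Pmᵀ := by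
      have := congrArg Matrix.transpose (hPT n)
      simp only [Matrix.transpose_mul, Matrix.diagonal_transpose] at this
      exact this.symm
    rw [hHd_eq]
    have e1 : Matrix.diagonal (Λ n) * (Qᵀ * W * Pmᵀ) = Qᵀ * ((T n)ᵀ * W) * Pmᵀ := by
      rw [← mul_assoc, ← mul_assoc, hDQ, mul_assoc Qᵀ (T n)ᵀ W]
    have e2 : Qᵀ * W * Pmᵀ * Matrix.diagonal (Λ n) = Qᵀ * (W * (T n)ᵀ) * Pmᵀ := by
      rw [mul_assoc (Qᵀ * W) Pmᵀ (Matrix.diagonal (Λ n)), hPD,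
        ← mul_assoc (Qᵀ * W) (T n)ᵀ Pmᵀ, mul_assoc Qᵀ W (T n)ᵀ]
    rw [e1, e2, ← Matrix.sub_mul, ← Matrix.mul_sub]
  have ip_hadG_move : ∀ n (A B : Mat d), HLB.ip (Hd n A) B = HLB.ip A (Hd n B) := by
    intro n A B
    apply Finset.sum_congr rfl; intro i _
    apply Finset.sum_congr rfl; intro j _
    simp only [hHdef, Matrix.of_apply]
    ring
  -- key identity
  have key1 : ∀ n (W : Mat d), HLB.SLow W →
      HLB.ip (C n) W = HLB.ip (Hd n u) (Qᵀ * W * Pmᵀ) := by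
    intro n W hW
    have hWn : HLB.SLow ((T n)ᵀ * W - W * (T n)ᵀ) := HLB.slow_comm hW (hUT n)
    calc HLB.ip (C n) W = HLB.ip (T n * Y - Y * T n) W := HLB.ip_lowPart _ hW
      _ = HLB.ip Y ((T n)ᵀ * W - W * (T n)ᵀ) := by
          rw [HLB.ip_sub_left, HLB.ip_mul_left, HLB.ip_mul_right, ← HLB.ip_sub_right]
      _ = HLB.ip (Pm * Y * Q) (Qᵀ * ((T n)ᵀ * W - W * (T n)ᵀ) * Pmᵀ) := (ip_conj_inv _ _).symm
      _ = HLB.ip u (Qᵀ * ((T n)ᵀ * W - W * (T n)ᵀ) * Pmᵀ) :=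
          (hproj _ _ hWn rfl).symm
      _ = HLB.ip u (Hd n (Qᵀ * W * Pmᵀ)) := by rw [hclosure]
      _ = HLB.ip (Hd n u) (Qᵀ * W * Pmᵀ) := (ip_hadG_move n u _).symm
  -- step A : per-n bound
  set h1c : ℝ := sigMax Pmᵀ * sigMax Q with hh1c
  set h2c : ℝ := sigMax Qᵀ * sigMax Pm with hh2c
  have stepA : ∀ n, HLB.ip (Hd n u) (Hd n u) ≤ h1c^2 * HLB.ip (C n) (C n) := by
    intro n
    set Wn : Mat d := (T n)ᵀ * Wu - Wu * (T n)ᵀ with hWn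
    have hWnslow : HLB.SLow Wn := HLB.slow_comm hWu (hUT n)
    have hGn_eq : Hd n u = Qᵀ * Wn * Pmᵀ := by
      rw [huWu, hclosure]
    have hWn_rec : Wn = Pmᵀ * (Hd n u) * Qᵀ := by
      rw [hGn_eq, ← mul_assoc Pmᵀ (Qᵀ * Wn) Pmᵀ, ← mul_assoc Pmᵀ Qᵀ Wn, hPtQt, one_mul,
        mul_assoc Wn Pmᵀ Qᵀ, hPtQt, mul_one]
    have hWnbound : HLB.ip Wn Wn ≤ h1c^2 * HLB.ip (Hd n u) (Hd n u) := by
      rw [hWn_rec]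
      have := HLB.ip_conj_le Pmᵀ Qᵀ (Hd n u)
      rwa [Matrix.transpose_transpose] at this
    have hkey := key1 n Wn hWnslow
    rw [← hGn_eq] at hkey
    -- Cauchy-Schwarz
    have hcs := HLB.ip_cs (C n) Wn
    rw [hkey] at hcs
    set a : ℝ := HLB.ip (Hd n u) (Hd n u) with ha
    set c : ℝ := HLB.ip (C n) (C n) with hc
    have ha0 : 0 ≤ a := HLB.ip_self_nonneg _
    have hc0 : 0 ≤ c := HLB.ip_self_nonneg _
    -- hcs : a^2 ≤ c * ip Wn Wn ≤ c * (h1c^2 * a)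
    have h5 : a^2 ≤ c * (h1c^2 * a) :=
      le_trans hcs (mul_le_mul_of_nonneg_left hWnbound hc0)
    rcases eq_or_lt_of_le ha0 with heq | hlt
    · rw [← heq]
      positivity
    · have := (mul_le_mul_iff_of_pos_right hlt).mp (by nlinarith : a * a ≤ (c * h1c^2) * a)
      calc a ≤ c * h1c^2 := this
        _ = h1c^2 * c := mul_comm _ _
  -- step B : gap bound
  have hdiagu : ∀ i, u i i = 0 := by
    intro i
    rw [huWu]
    exact HLB.diag_conj_zero Q Pm T Λ hPQ hTQ hPT hUT hdist Wu hWu i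
  have stepB : gapMin Λ * HLB.ip u u ≤ ∑ n, HLB.ip (Hd n u) (Hd n u) := by
    have hswap : ∑ n, HLB.ip (Hd n u) (Hd n u)
        = ∑ i, ∑ j, (∑ n, (Λ n i - Λ n j)^2) * (u i j)^2 := by
      simp only [HLB.ip, hHdef, Matrix.of_apply]
      rw [Finset.sum_comm]
      apply Finset.sum_congr rfl; intro i _
      rw [Finset.sum_comm]
      apply Finset.sum_congr rfl; intro j _
      rw [Finset.sum_mul]
      apply Finset.sum_congr rfl; intro n _
      ring
    rw [hswap, HLB.ip, Finset.mul_sum]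
    apply Finset.sum_le_sum; intro i _
    rw [Finset.mul_sum]
    apply Finset.sum_le_sum; intro j _
    by_cases hij : i = j
    · subst hij
      rw [hdiagu i]
      simp
    · have := gap_le i j hij
      have hsq : u i j * u i j = (u i j)^2 := by ring
      rw [hsq]
      exact mul_le_mul_of_nonneg_right this (sq_nonneg _)
  -- step C : lower bound on u
  have stepC : HLB.ip Y Y ≤ h2c^2 * HLB.ip u u := by
    set ZY : Mat d := Qᵀ * Y * Pmᵀ with hZY
    have hipZY : HLB.ip u ZY = HLB.ip Y Y := by
      rw [hproj ZY Y hY rfl, hZY, ip_conj_inv]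
    have hZYbound : HLB.ip ZY ZY ≤ h2c^2 * HLB.ip Y Y := by
      rw [hZY]
      have := HLB.ip_conj_le Qᵀ Pmᵀ Y
      rwa [Matrix.transpose_transpose] at this
    have hcs := HLB.ip_cs u ZY
    rw [hipZY] at hcs
    set a : ℝ := HLB.ip Y Y with ha
    set b : ℝ := HLB.ip u u with hb
    have ha0 : 0 ≤ a := HLB.ip_self_nonneg _
    have hb0 : 0 ≤ b := HLB.ip_self_nonneg _
    have h5 : a^2 ≤ b * (h2c^2 * a) :=
      le_trans hcs (mul_le_mul_of_nonneg_left hZYbound hb0)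
    rcases eq_or_lt_of_le ha0 with heq | hlt
    · rw [← heq]
      positivity
    · have := (mul_le_mul_iff_of_pos_right hlt).mp (by nlinarith : a * a ≤ (b * h2c^2) * a)
      calc a ≤ b * h2c^2 := this
        _ = h2c^2 * b := mul_comm _ _
  -- sigma bounds
  have hsQ : sigMax Q ≤ sigMax V := by
    rw [hQdef]
    apply HLB.sigMax_orthoL
    rw [Matrix.transpose_transpose]
    exact hUUt
  have hsQt : sigMax Qᵀ ≤ sigMax V := by
    rw [hQdef, Matrix.transpose_mul, Matrix.transpose_transpose]
    calc sigMax (Vᵀ * U₀) ≤ sigMax Vᵀ := HLB.sigMax_orthoR hOrt' _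
      _ ≤ sigMax V := HLB.sigMax_transpose_le V
  have hsP : sigMax Pm ≤ sigMax V⁻¹ := by
    rw [hPdef]
    exact HLB.sigMax_orthoR hOrt' _
  have hsPt : sigMax Pmᵀ ≤ sigMax V⁻¹ := by
    rw [hPdef, Matrix.transpose_mul]
    calc sigMax (U₀ᵀ * (V⁻¹)ᵀ) ≤ sigMax (V⁻¹)ᵀ := by
          apply HLB.sigMax_orthoL
          rw [Matrix.transpose_transpose]
          exact hUUt
      _ ≤ sigMax V⁻¹ := HLB.sigMax_transpose_le _
  have hmin : 0 < sigMin V := HLB.sigMin_pos hinvV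
  have hinvle : sigMax V⁻¹ ≤ (sigMin V)⁻¹ := HLB.sigMax_inv_le hinvV hVinv
  have hsV0 : 0 ≤ sigMax V := HLB.sigMax_nonneg V
  have hsVi0 : 0 ≤ sigMax V⁻¹ := HLB.sigMax_nonneg _
  set κ : ℝ := condNum V with hκ
  have hκval : κ = sigMax V * (sigMin V)⁻¹ := by
    rw [hκ, condNum, div_eq_mul_inv]
  have hκpos : 0 < κ := by
    rw [hκval]
    apply mul_pos _ (inv_pos.mpr hmin)
    -- sigMax V > 0
    obtain ⟨r, x, hx, hr⟩ := HLB.sv_set_nonempty V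
    have h6 := HLB.sigMin_le V x hx
    have h7 := HLB.enorm_mulVec_le_sigMax V x
    rw [hx, mul_one] at h7
    linarith
  have hh1 : 0 ≤ h1c := by
    rw [hh1c]
    apply mul_nonneg (HLB.sigMax_nonneg _) (HLB.sigMax_nonneg _)
  have hh2 : 0 ≤ h2c := by
    rw [hh2c]
    apply mul_nonneg (HLB.sigMax_nonneg _) (HLB.sigMax_nonneg _)
  have hκbig1 : h1c ≤ κ := by
    rw [hh1c, hκval]
    calc sigMax Pmᵀ * sigMax Q ≤ (sigMin V)⁻¹ * sigMax V := by
          apply mul_le_mul (le_trans hsPt hinvle) hsQ (HLB.sigMax_nonneg _)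
          exact inv_nonneg.mpr hmin.le
      _ = sigMax V * (sigMin V)⁻¹ := mul_comm _ _
  have hκbig2 : h2c ≤ κ := by
    rw [hh2c, hκval]
    apply mul_le_mul hsQt (le_trans hsP hinvle) (HLB.sigMax_nonneg _) hsV0
  -- final chain
  set S : ℝ := ∑ n, HLB.ip (C n) (C n) with hS
  have hS0 : 0 ≤ S := Finset.sum_nonneg fun n _ => HLB.ip_self_nonneg _
  have chain : gapMin Λ * HLB.ip Y Y ≤ κ^4 * S := by
    have c1 : gapMin Λ * HLB.ip Y Y ≤ gapMin Λ * (h2c^2 * HLB.ip u u) :=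
      mul_le_mul_of_nonneg_left stepC hγ.le
    have c2 : gapMin Λ * HLB.ip u u ≤ ∑ n, HLB.ip (Hd n u) (Hd n u) := stepB
    have c3 : ∑ n, HLB.ip (Hd n u) (Hd n u) ≤ h1c^2 * S := by
      rw [hS, Finset.mul_sum]
      exact Finset.sum_le_sum fun n _ => stepA n
    have c4 : gapMin Λ * HLB.ip Y Y ≤ h2c^2 * (h1c^2 * S) := by
      calc gapMin Λ * HLB.ip Y Y ≤ gapMin Λ * (h2c^2 * HLB.ip u u) := c1
        _ = h2c^2 * (gapMin Λ * HLB.ip u u) := by ring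
        _ ≤ h2c^2 * (∑ n, HLB.ip (Hd n u) (Hd n u)) :=
            mul_le_mul_of_nonneg_left c2 (sq_nonneg _)
        _ ≤ h2c^2 * (h1c^2 * S) := mul_le_mul_of_nonneg_left c3 (sq_nonneg _)
    calc gapMin Λ * HLB.ip Y Y ≤ h2c^2 * (h1c^2 * S) := c4
      _ = (h2c^2 * h1c^2) * S := by ring
      _ ≤ κ^4 * S := by
          apply mul_le_mul_of_nonneg_right _ hS0
          calc h2c^2 * h1c^2 ≤ κ^2 * κ^2 := by
                apply mul_le_mul (pow_le_pow_left₀ hh2 hκbig2 2)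
                  (pow_le_pow_left₀ hh1 hκbig1 2) (sq_nonneg _) (sq_nonneg _)
            _ = κ^4 := by ring
  -- rewrite the goal
  have hgoalsum : ∑ n, frob (lowPart (mcomm (U₀ᵀ * M n * U₀) X)) ^ 2 = S := by
    rw [hS]
    apply Finset.sum_congr rfl; intro n _
    have hTn : U₀ᵀ * M n * U₀ = T n := rfl
    rw [hTn, HLB.frob_sq, hCred n]
  rw [hgoalsum]
  have hfX : frob X ^2 = 2 * HLB.ip Y Y := by rw [HLB.frob_sq, hnsqX]
  rw [hfX]
  rw [div_mul_eq_mul_div, div_le_iff₀ (by positivity)]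
  calc gapMin Λ * (2 * HLB.ip Y Y) = 2 * (gapMin Λ * HLB.ip Y Y) := by ring
    _ ≤ 2 * (κ^4 * S) := by linarith [chain]
    _ = S * (2 * κ^4) := by ring
end
end
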